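/- arXiv:2411.12085 — 9 statements merged into one kernel-verified Lean document; each statement's English description precedes it below -/
import Mathlib

section
/- Let M_1 ⊆ R^s × R^{t_1} and M_2 ⊆ R^s × R^{t_2} be finite sets such that proj_s(M_1) ∪ proj_s(M_2) is a collection of affinely independent points in R^s. Then a point (p^1, q^1, p^2, q^2) satisfies (p^i, q^i) ∈ conv(M_i) for i = 1,2 and p^1 = p^2 if and only if (p^1, q^1, p^2, q^2) belongs to the convex hull of { (p^1, q^1, p^2, q^2) : (p^i, q^i) ∈ M_i for i = 1,2, p^1 = p^2 }. -/
/-- Decomposition of coupled convex hull constraints under affine independence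
of the shared coordinates. -/
theorem stmt4 {s t1 t2 : ℕ}
    (M1 : Set ((Fin s → ℝ) × (Fin t1 → ℝ))) (M2 : Set ((Fin s → ℝ) × (Fin t2 → ℝ)))
    (hM1 : M1.Finite) (hM2 : M2.Finite)
    (hindep : AffineIndependent ℝ
      (fun q : ↥(Prod.fst '' M1 ∪ Prod.fst '' M2) => (q : Fin s → ℝ)))
    (z : ((Fin s → ℝ) × (Fin t1 → ℝ)) × ((Fin s → ℝ) × (Fin t2 → ℝ))) :
    (z.1 ∈ convexHull ℝ M1 ∧ z.2 ∈ convexHull ℝ M2 ∧ z.1.1 = z.2.1) ↔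
      z ∈ convexHull ℝ {q : ((Fin s → ℝ) × (Fin t1 → ℝ)) × ((Fin s → ℝ) × (Fin t2 → ℝ)) |
        q.1 ∈ M1 ∧ q.2 ∈ M2 ∧ q.1.1 = q.2.1} := by
  classical
  set S := {q : ((Fin s → ℝ) × (Fin t1 → ℝ)) × ((Fin s → ℝ) × (Fin t2 → ℝ)) |
        q.1 ∈ M1 ∧ q.2 ∈ M2 ∧ q.1.1 = q.2.1} with hS
  constructor
  · rintro ⟨hz1, hz2, heq⟩
    set F1 := hM1.toFinset with hF1
    set F2 := hM2.toFinset with hF2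
    rw [← hM1.coe_toFinset, Finset.convexHull_eq] at hz1
    rw [← hM2.coe_toFinset, Finset.convexHull_eq] at hz2
    obtain ⟨w1, hw1nn, hw1sum, hw1c⟩ := hz1
    obtain ⟨w2, hw2nn, hw2sum, hw2c⟩ := hz2
    rw [Finset.centerMass_eq_of_sum_1 _ _ hw1sum] at hw1c
    rw [Finset.centerMass_eq_of_sum_1 _ _ hw2sum] at hw2c
    simp only [id] at hw1c hw2c
    set P : Set (Fin s → ℝ) := Prod.fst '' M1 ∪ Prod.fst '' M2 with hPdef
    have hP : P.Finite := (hM1.image _).union (hM2.image _)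
    haveI : Fintype ↥P := hP.fintype
    -- fiber sums
    set V : (Fin s → ℝ) → ℝ := fun x => ∑ a ∈ F1, if a.1 = x then w1 a else 0 with hVdef
    set V' : (Fin s → ℝ) → ℝ := fun x => ∑ b ∈ F2, if b.1 = x then w2 b else 0 with hV'def
    have hmem1 : ∀ a ∈ F1, a.1 ∈ P := fun a ha => Or.inl ⟨a, hM1.mem_toFinset.mp ha, rfl⟩
    have hmem2 : ∀ b ∈ F2, b.1 ∈ P := fun b hb => Or.inr ⟨b, hM2.mem_toFinset.mp hb, rfl⟩
    -- sums over the subtype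
    have key1 : ∀ (t : ℕ) (F : Finset ((Fin s → ℝ) × (Fin t → ℝ))) (w : _ → ℝ)
        (hm : ∀ a ∈ F, a.1 ∈ P) (f : ((Fin s → ℝ) × (Fin t → ℝ)) → ℝ),
        ∑ x : ↥P, ∑ a ∈ F, (if a.1 = (x : Fin s → ℝ) then w a else 0) * f a
          = ∑ a ∈ F, w a * f a := by
      intro t F w hm f
      rw [Finset.sum_comm]
      refine Finset.sum_congr rfl fun a ha => ?_
      have : ∀ x : ↥P, (if a.1 = (x : Fin s → ℝ) then w a else 0) * f a
          = if x = ⟨a.1, hm a ha⟩ then w a * f a else 0 := by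
        intro x
        by_cases h : a.1 = (x : Fin s → ℝ)
        · rw [if_pos h, if_pos (Subtype.ext h.symm)]
        · rw [if_neg h, if_neg (fun hx => h (by rw [hx])), zero_mul]
      simp_rw [this]
      rw [Finset.sum_ite_eq' Finset.univ, if_pos (Finset.mem_univ _)]
    have hVsum : ∑ x : ↥P, V (x : Fin s → ℝ) = 1 := by
      have := key1 t1 F1 w1 hmem1 (fun _ => 1)
      simpa [hVdef] using this.trans (by simp only [mul_one]; exact hw1sum)
    have hV'sum : ∑ x : ↥P, V' (x : Fin s → ℝ) = 1 := by
      have := key1 t2 F2 w2 hmem2 (fun _ => 1)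
      simpa [hV'def] using this.trans (by simp only [mul_one]; exact hw2sum)
    -- affine combinations of the shared coordinates
    have keyc : ∀ (t : ℕ) (F : Finset ((Fin s → ℝ) × (Fin t → ℝ))) (w : _ → ℝ)
        (hm : ∀ a ∈ F, a.1 ∈ P),
        ∑ x : ↥P, (∑ a ∈ F, if a.1 = (x : Fin s → ℝ) then w a else 0) • (x : Fin s → ℝ)
          = ∑ a ∈ F, w a • a.1 := by
      intro t F w hm
      have : ∀ x : ↥P, (∑ a ∈ F, if a.1 = (x : Fin s → ℝ) then w a else 0) • (x : Fin s → ℝ)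
          = ∑ a ∈ F, if a.1 = (x : Fin s → ℝ) then w a • a.1 else 0 := by
        intro x
        rw [Finset.sum_smul]
        refine Finset.sum_congr rfl fun a ha => ?_
        by_cases h : a.1 = (x : Fin s → ℝ)
        · rw [if_pos h, if_pos h, h]
        · rw [if_neg h, if_neg h, zero_smul]
      simp_rw [this]
      rw [Finset.sum_comm]
      refine Finset.sum_congr rfl fun a ha => ?_
      have : ∀ x : ↥P, (if a.1 = (x : Fin s → ℝ) then w a • a.1 else 0)
          = if x = ⟨a.1, hm a ha⟩ then w a • a.1 else 0 := by
        intro x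
        by_cases h : a.1 = (x : Fin s → ℝ)
        · rw [if_pos h, if_pos (Subtype.ext h.symm)]
        · rw [if_neg h, if_neg (fun hx => h (by rw [hx]))]
      simp_rw [this]
      rw [Finset.sum_ite_eq' Finset.univ, if_pos (Finset.mem_univ _)]
    have hz11 : z.1.1 = ∑ a ∈ F1, w1 a • a.1 := by
      rw [← hw1c, Prod.fst_sum]
      exact Finset.sum_congr rfl fun a _ => rfl
    have hz21 : z.2.1 = ∑ b ∈ F2, w2 b • b.1 := by
      rw [← hw2c, Prod.fst_sum]
      exact Finset.sum_congr rfl fun b _ => rfl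
    have hVcomb : ∑ x : ↥P, V (x : Fin s → ℝ) • (x : Fin s → ℝ) = z.1.1 := by
      rw [hz11]; exact keyc t1 F1 w1 hmem1
    have hV'comb : ∑ x : ↥P, V' (x : Fin s → ℝ) • (x : Fin s → ℝ) = z.1.1 := by
      rw [heq, hz21]; exact keyc t2 F2 w2 hmem2
    -- affine independence gives V = V' on P
    rw [affineIndependent_iff_indicator_eq_of_affineCombination_eq] at hindep
    have hVV' : ∀ x : ↥P, V (x : Fin s → ℝ) = V' (x : Fin s → ℝ) := by
      have h := hindep Finset.univ Finset.univ (fun x => V (x : Fin s → ℝ))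
        (fun x => V' (x : Fin s → ℝ)) hVsum hV'sum
        (by
          rw [Finset.affineCombination_eq_linear_combination _ _ _ hVsum,
            Finset.affineCombination_eq_linear_combination _ _ _ hV'sum, hVcomb, hV'comb])
      intro x
      have := congrFun h x
      simpa using this
    have hVV'all : ∀ x, V x = V' x := by
      intro x
      by_cases hx : x ∈ P
      · exact hVV' ⟨x, hx⟩
      · have h1 : V x = 0 := by
          refine Finset.sum_eq_zero fun a ha => ?_
          rw [if_neg (fun h => hx (by rw [← h]; exact hmem1 a ha))]
        have h2 : V' x = 0 := by
          refine Finset.sum_eq_zero fun b hb => ?_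
          rw [if_neg (fun h => hx (by rw [← h]; exact hmem2 b hb))]
        rw [h1, h2]
    have hVnn : ∀ x, 0 ≤ V x := by
      intro x
      refine Finset.sum_nonneg fun a ha => ?_
      by_cases h : a.1 = x
      · rw [if_pos h]; exact hw1nn a ha
      · rw [if_neg h]
    have hw1le : ∀ a ∈ F1, w1 a ≤ V a.1 := by
      intro a ha
      have := Finset.single_le_sum (f := fun a' => if a'.1 = a.1 then w1 a' else 0)
        (fun a' ha' => by by_cases h : a'.1 = a.1 <;> simp [h, hw1nn a' ha']) ha
      simpa using this
    have hw2le : ∀ b ∈ F2, w2 b ≤ V' b.1 := by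
      intro b hb
      have := Finset.single_le_sum (f := fun b' => if b'.1 = b.1 then w2 b' else 0)
        (fun b' hb' => by by_cases h : b'.1 = b.1 <;> simp [h, hw2nn b' hb']) hb
      simpa using this
    -- the coupled weights
    set FC := (F1 ×ˢ F2).filter (fun q => q.1.1 = q.2.1) with hFC
    set ω : ((Fin s → ℝ) × (Fin t1 → ℝ)) × ((Fin s → ℝ) × (Fin t2 → ℝ)) → ℝ :=
      fun q => w1 q.1 * w2 q.2 / V q.1.1 with hω
    have hωnn : ∀ q ∈ FC, 0 ≤ ω q := by
      rintro ⟨a, b⟩ hq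
      rw [hFC, Finset.mem_filter, Finset.mem_product] at hq
      exact div_nonneg (mul_nonneg (hw1nn _ hq.1.1) (hw2nn _ hq.1.2)) (hVnn _)
    -- scalar inner sums
    have hinner1 : ∀ a ∈ F1, ∑ b ∈ F2, (if a.1 = b.1 then w1 a * w2 b / V a.1 else 0) = w1 a := by
      intro a ha
      have : ∀ b ∈ F2, (if a.1 = b.1 then w1 a * w2 b / V a.1 else 0)
          = w1 a / V a.1 * (if b.1 = a.1 then w2 b else 0) := by
        intro b hb
        by_cases h : a.1 = b.1
        · rw [if_pos h, if_pos h.symm]; ring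
        · rw [if_neg h, if_neg (fun h' => h h'.symm), mul_zero]
      rw [Finset.sum_congr rfl this, ← Finset.mul_sum]
      have hVa : (∑ b ∈ F2, if b.1 = a.1 then w2 b else 0) = V a.1 := (hVV'all a.1).symm
      rw [hVa]
      by_cases hV0 : V a.1 = 0
      · have : w1 a = 0 := le_antisymm (hV0 ▸ hw1le a ha) (hw1nn a ha)
        rw [hV0, this]; ring
      · field_simp
    have hinner2 : ∀ b ∈ F2, ∑ a ∈ F1, (if a.1 = b.1 then w1 a * w2 b / V a.1 else 0) = w2 b := by
      intro b hb
      have : ∀ a ∈ F1, (if a.1 = b.1 then w1 a * w2 b / V a.1 else 0)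
          = w2 b / V b.1 * (if a.1 = b.1 then w1 a else 0) := by
        intro a ha
        by_cases h : a.1 = b.1
        · rw [if_pos h, if_pos h, h]; ring
        · rw [if_neg h, if_neg h, mul_zero]
      rw [Finset.sum_congr rfl this, ← Finset.mul_sum]
      have hVb : (∑ a ∈ F1, if a.1 = b.1 then w1 a else 0) = V b.1 := rfl
      rw [hVb]
      by_cases hV0 : V b.1 = 0
      · have h' := hw2le b hb
        rw [← hVV'all b.1] at h'
        have : w2 b = 0 := le_antisymm (hV0 ▸ h') (hw2nn b hb)
        rw [hV0, this]; ring
      · field_simp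
    have hωsum : ∑ q ∈ FC, ω q = 1 := by
      rw [hFC, Finset.sum_filter, Finset.sum_product]
      rw [Finset.sum_congr rfl (fun a ha => hinner1 a ha)]
      exact hw1sum
    have hωfst : ∑ q ∈ FC, ω q • q.1 = z.1 := by
      rw [hFC, Finset.sum_filter, Finset.sum_product]
      have : ∀ a ∈ F1, (∑ b ∈ F2, if a.1 = b.1 then ω (a, b) • (a, b).1 else 0) = w1 a • a := by
        intro a ha
        have step : ∀ b ∈ F2, (if a.1 = b.1 then ω (a, b) • (a, b).1 else 0)
            = (if a.1 = b.1 then w1 a * w2 b / V a.1 else 0) • a := by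
          intro b hb
          by_cases h : a.1 = b.1
          · rw [if_pos h, if_pos h]
          · rw [if_neg h, if_neg h, zero_smul]
        rw [Finset.sum_congr rfl step, ← Finset.sum_smul, hinner1 a ha]
      rw [Finset.sum_congr rfl this, ← hw1c]
    have hωsnd : ∑ q ∈ FC, ω q • q.2 = z.2 := by
      rw [hFC, Finset.sum_filter, Finset.sum_product, Finset.sum_comm]
      have : ∀ b ∈ F2, (∑ a ∈ F1, if a.1 = b.1 then ω (a, b) • (a, b).2 else 0) = w2 b • b := by
        intro b hb
        have step : ∀ a ∈ F1, (if a.1 = b.1 then ω (a, b) • (a, b).2 else 0)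
            = (if a.1 = b.1 then w1 a * w2 b / V a.1 else 0) • b := by
          intro a ha
          by_cases h : a.1 = b.1
          · rw [if_pos h, if_pos h]
          · rw [if_neg h, if_neg h, zero_smul]
        rw [Finset.sum_congr rfl step, ← Finset.sum_smul, hinner2 b hb]
      rw [Finset.sum_congr rfl this, ← hw2c]
    have hωc : ∑ q ∈ FC, ω q • q = z := by
      apply Prod.ext
      · rw [Prod.fst_sum]; exact hωfst
      · rw [Prod.snd_sum]; exact hωsnd
    have hmemS : ∀ q ∈ FC, q ∈ S := by
      intro q hq
      rw [hFC, Finset.mem_filter, Finset.mem_product] at hq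
      exact ⟨hM1.mem_toFinset.mp hq.1.1, hM2.mem_toFinset.mp hq.1.2, hq.2⟩
    have := FC.centerMass_mem_convexHull (w := ω) hωnn (by rw [hωsum]; norm_num)
      (z := id) (fun q hq => hmemS q hq)
    rwa [Finset.centerMass_eq_of_sum_1 _ _ hωsum, show ∑ q ∈ FC, ω q • id q = z from hωc] at this
  · intro hz
    have h1 : convexHull ℝ S ⊆ Prod.fst ⁻¹' (convexHull ℝ M1) := by
      apply convexHull_min
      · exact fun q hq => subset_convexHull ℝ M1 hq.1
      · exact (convex_convexHull ℝ M1).linear_preimage (LinearMap.fst ℝ _ _)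
    have h2 : convexHull ℝ S ⊆ Prod.snd ⁻¹' (convexHull ℝ M2) := by
      apply convexHull_min
      · exact fun q hq => subset_convexHull ℝ M2 hq.2.1
      · exact (convex_convexHull ℝ M2).linear_preimage (LinearMap.snd ℝ _ _)
    have h3 : convexHull ℝ S ⊆ {q : ((Fin s → ℝ) × (Fin t1 → ℝ)) × ((Fin s → ℝ) × (Fin t2 → ℝ)) |
        q.1.1 = q.2.1} := by
      apply convexHull_min
      · exact fun q hq => hq.2.2
      · intro x hx y hy a b ha hb hab
        simp only [Set.mem_setOf_eq] at hx hy ⊢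
        show (a • x + b • y).1.1 = (a • x + b • y).2.1
        simp [Prod.fst_add, Prod.smul_fst, Prod.snd_add, Prod.smul_snd, hx, hy]
    exact ⟨h1 hz, h2 hz, h3 hz⟩
end

section
/- Let X^{(1)}, X^{(2)} be finite subsets of {0,1}^n × R^{m_1} and {0,1}^n × R^{m_2} respectively, and let c^{(i)}, d^{(i)} be linear objectives. Consider the vertex-extended sets X_V^{(i)} = { (x, y, w(x)) : (x, y) ∈ X^{(i)} } where w(x) ∈ {0,1}^{2^n} is the vertex-indicator vector of x. Then the set { (x^1, y^1, w^1, x^2, y^2, w^2) : (x^i, y^i, w^i) ∈ conv(X_V^{(i)}) for i = 1,2, x^1 = x^2, w^1 = w^2 } equals the convex hull of { (x^1, y^1, w(x^1), x^2, y^2, w(x^2)) : (x^i, y^i) ∈ X^{(i)}, x^1 = x^2 }. Consequently, minimizing a linear function of (x, y) over the former set yields the same optimal value as over the latter (strong duality of the V-Lagrangian dual). -/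
/-- the Boolean vertex associated to a 0/1 vector -/
noncomputable def stmt6phi {n : ℕ} (x : Fin n → ℝ) : Fin n → Bool :=
  fun j => if x j = 1 then true else false

/-- the real vector associated to a Boolean vertex -/
noncomputable def stmt6toR {n : ℕ} (v : Fin n → Bool) : Fin n → ℝ :=
  fun j => if v j then 1 else 0

lemma stmt6_toR_phi {n : ℕ} {x : Fin n → ℝ} (h : ∀ j, x j = 0 ∨ x j = 1) :
    stmt6toR (stmt6phi x) = x := by
  funext j
  simp only [stmt6toR, stmt6phi]
  rcases h j with h0 | h1
  · simp [h0]
  · simp [h1]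

lemma stmt6_w_indicator {n : ℕ} {x : Fin n → ℝ} (h : ∀ j, x j = 0 ∨ x j = 1)
    (v : Fin n → Bool) :
    (∏ j, if v j then x j else 1 - x j) = if v = stmt6phi x then 1 else 0 := by
  by_cases hv : v = stmt6phi x
  · subst hv
    rw [if_pos rfl]
    apply Finset.prod_eq_one
    intro j _
    rcases h j with h0 | h1
    · simp [stmt6phi, h0]
    · simp [stmt6phi, h1]
  · rw [if_neg hv]
    have hj : ∃ j, v j ≠ stmt6phi x j := by
      by_contra hc; push_neg at hc; exact hv (funext hc)
    obtain ⟨j, hj⟩ := hj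
    apply Finset.prod_eq_zero (Finset.mem_univ j)
    rcases h j with h0 | h1
    · have hpf : stmt6phi x j = false := by simp [stmt6phi, h0]
      have hvj : v j = true := by
        cases hvj : v j
        · exact absurd (by rw [hvj, hpf]) hj
        · rfl
      simp [hvj, h0]
    · have hpf : stmt6phi x j = true := by simp [stmt6phi, h1]
      have hvj : v j = false := by
        cases hvj : v j
        · rfl
        · exact absurd (by rw [hvj, hpf]) hj
      simp [hvj, h1]

/-- Strong duality of the V-Lagrangian dual for the two-block problem: the
coupled relaxation with vertex variables equals the convex hull of the coupled
integral set, so linear minimization over both yields the same value. -/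
theorem stmt6 {n m1 m2 : ℕ}
    (X1 : Set ((Fin n → ℝ) × (Fin m1 → ℝ))) (X2 : Set ((Fin n → ℝ) × (Fin m2 → ℝ)))
    (hX1 : X1.Finite) (hX2 : X2.Finite)
    (hb1 : ∀ p ∈ X1, ∀ j, p.1 j = 0 ∨ p.1 j = 1)
    (hb2 : ∀ p ∈ X2, ∀ j, p.1 j = 0 ∨ p.1 j = 1) :
    letI w : (Fin n → ℝ) → (Fin n → Bool) → ℝ :=
      fun x v => ∏ j, if v j then x j else 1 - x j
    letI XV1 : Set ((Fin n → ℝ) × (Fin m1 → ℝ) × ((Fin n → Bool) → ℝ)) :=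
      {q | ∃ p ∈ X1, q = (p.1, p.2, w p.1)}
    letI XV2 : Set ((Fin n → ℝ) × (Fin m2 → ℝ) × ((Fin n → Bool) → ℝ)) :=
      {q | ∃ p ∈ X2, q = (p.1, p.2, w p.1)}
    letI A : Set (((Fin n → ℝ) × (Fin m1 → ℝ) × ((Fin n → Bool) → ℝ)) ×
        ((Fin n → ℝ) × (Fin m2 → ℝ) × ((Fin n → Bool) → ℝ))) :=
      {z | z.1 ∈ convexHull ℝ XV1 ∧ z.2 ∈ convexHull ℝ XV2 ∧
        z.1.1 = z.2.1 ∧ z.1.2.2 = z.2.2.2}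
    letI B : Set (((Fin n → ℝ) × (Fin m1 → ℝ) × ((Fin n → Bool) → ℝ)) ×
        ((Fin n → ℝ) × (Fin m2 → ℝ) × ((Fin n → Bool) → ℝ))) :=
      convexHull ℝ {z | z.1 ∈ XV1 ∧ z.2 ∈ XV2 ∧ z.1.1 = z.2.1}
    A = B ∧
      ∀ c : (((Fin n → ℝ) × (Fin m1 → ℝ) × ((Fin n → Bool) → ℝ)) ×
          ((Fin n → ℝ) × (Fin m2 → ℝ) × ((Fin n → Bool) → ℝ))) →ₗ[ℝ] ℝ,
        sInf (c '' A) = sInf (c '' B) := by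
  set w : (Fin n → ℝ) → (Fin n → Bool) → ℝ :=
    fun x v => ∏ j, if v j then x j else 1 - x j with hwdef
  set XV1 : Set ((Fin n → ℝ) × (Fin m1 → ℝ) × ((Fin n → Bool) → ℝ)) :=
    {q | ∃ p ∈ X1, q = (p.1, p.2, w p.1)} with hXV1def
  set XV2 : Set ((Fin n → ℝ) × (Fin m2 → ℝ) × ((Fin n → Bool) → ℝ)) :=
    {q | ∃ p ∈ X2, q = (p.1, p.2, w p.1)} with hXV2def
  set A : Set (((Fin n → ℝ) × (Fin m1 → ℝ) × ((Fin n → Bool) → ℝ)) ×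
      ((Fin n → ℝ) × (Fin m2 → ℝ) × ((Fin n → Bool) → ℝ))) :=
    {z | z.1 ∈ convexHull ℝ XV1 ∧ z.2 ∈ convexHull ℝ XV2 ∧
      z.1.1 = z.2.1 ∧ z.1.2.2 = z.2.2.2} with hAdef
  set B : Set (((Fin n → ℝ) × (Fin m1 → ℝ) × ((Fin n → Bool) → ℝ)) ×
      ((Fin n → ℝ) × (Fin m2 → ℝ) × ((Fin n → Bool) → ℝ))) :=
    convexHull ℝ {z | z.1 ∈ XV1 ∧ z.2 ∈ XV2 ∧ z.1.1 = z.2.1} with hBdef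
  have hXV1 : XV1.Finite := by
    have h := hX1.image (fun p => (p.1, p.2, w p.1))
    convert h using 1
    ext q
    simp only [Set.mem_setOf_eq, Set.mem_image]
    constructor
    · rintro ⟨p, hp, rfl⟩; exact ⟨p, hp, rfl⟩
    · rintro ⟨p, hp, rfl⟩; exact ⟨p, hp, rfl⟩
  have hXV2 : XV2.Finite := by
    have h := hX2.image (fun p => (p.1, p.2, w p.1))
    convert h using 1
    ext q
    simp only [Set.mem_setOf_eq, Set.mem_image]
    constructor
    · rintro ⟨p, hp, rfl⟩; exact ⟨p, hp, rfl⟩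
    · rintro ⟨p, hp, rfl⟩; exact ⟨p, hp, rfl⟩
  have hAB : A = B := by
    apply Set.Subset.antisymm
    · -- A ⊆ B : the hard direction
      classical
      rintro ⟨z1, z2⟩ ⟨h1, h2, hxeq, hweq⟩
      rw [← hXV1.coe_toFinset, Finset.mem_convexHull'] at h1
      rw [← hXV2.coe_toFinset, Finset.mem_convexHull'] at h2
      obtain ⟨a, ha0, ha1, hasum⟩ := h1
      obtain ⟨b, hb0, hb1', hbsum⟩ := h2
      dsimp only at hxeq hweq hasum hbsum
      set s1 := hXV1.toFinset with hs1
      set s2 := hXV2.toFinset with hs2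
      -- basic facts about elements of s1, s2
      have fact1 : ∀ y ∈ s1, (∀ j, y.1 j = 0 ∨ y.1 j = 1) ∧ y.2.2 = w y.1 := by
        intro y hy
        rw [hs1, Set.Finite.mem_toFinset] at hy
        obtain ⟨p, hp, rfl⟩ := hy
        exact ⟨fun j => hb1 p hp j, rfl⟩
      have fact2 : ∀ y ∈ s2, (∀ j, y.1 j = 0 ∨ y.1 j = 1) ∧ y.2.2 = w y.1 := by
        intro y hy
        rw [hs2, Set.Finite.mem_toFinset] at hy
        obtain ⟨p, hp, rfl⟩ := hy
        exact ⟨fun j => hb2 p hp j, rfl⟩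
      -- marginal identities
      have M1 : ∀ v, (∑ y ∈ s1, if stmt6phi y.1 = v then a y else 0) = z1.2.2 v := by
        intro v
        rw [← hasum, Prod.snd_sum, Prod.snd_sum, Finset.sum_apply]
        apply Finset.sum_congr rfl
        intro y hy
        have hw := (fact1 y hy).2
        have h01 := (fact1 y hy).1
        have hterm : ((a y • y).2.2) v = a y * y.2.2 v := rfl
        rw [hterm, hw]
        have h2 : w y.1 v = if v = stmt6phi y.1 then 1 else 0 := stmt6_w_indicator h01 v
        rw [h2]
        by_cases h : v = stmt6phi y.1
        · rw [if_pos h, if_pos h.symm, mul_one]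
        · rw [if_neg h, if_neg (fun hh => h hh.symm), mul_zero]
      have M2 : ∀ v, (∑ y ∈ s2, if stmt6phi y.1 = v then b y else 0) = z1.2.2 v := by
        intro v
        rw [hweq, ← hbsum, Prod.snd_sum, Prod.snd_sum, Finset.sum_apply]
        apply Finset.sum_congr rfl
        intro y hy
        have hw := (fact2 y hy).2
        have h01 := (fact2 y hy).1
        have hterm : ((b y • y).2.2) v = b y * y.2.2 v := rfl
        rw [hterm, hw]
        have h2 : w y.1 v = if v = stmt6phi y.1 then 1 else 0 := stmt6_w_indicator h01 v
        rw [h2]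
        by_cases h : v = stmt6phi y.1
        · rw [if_pos h, if_pos h.symm, mul_one]
        · rw [if_neg h, if_neg (fun hh => h hh.symm), mul_zero]
      have lam0 : ∀ v, 0 ≤ z1.2.2 v := by
        intro v
        rw [← M1 v]
        apply Finset.sum_nonneg
        intro y hy
        by_cases h : stmt6phi y.1 = v
        · rw [if_pos h]; exact ha0 y hy
        · rw [if_neg h]
      have avanish : ∀ y ∈ s1, z1.2.2 (stmt6phi y.1) = 0 → a y = 0 := by
        intro y hy hl
        have hle : a y ≤ z1.2.2 (stmt6phi y.1) := by
          rw [← M1 (stmt6phi y.1)]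
          have hs := Finset.single_le_sum
            (f := fun y' => if stmt6phi y'.1 = stmt6phi y.1 then a y' else 0)
            (fun y' hy' => by
              split
              · exact ha0 y' hy'
              · exact le_refl 0) hy
          simpa using hs
        have := ha0 y hy
        linarith [hle, hl ▸ hle]
      have bvanish : ∀ y ∈ s2, z1.2.2 (stmt6phi y.1) = 0 → b y = 0 := by
        intro y hy hl
        have hle : b y ≤ z1.2.2 (stmt6phi y.1) := by
          rw [← M2 (stmt6phi y.1)]
          have hs := Finset.single_le_sum
            (f := fun y' => if stmt6phi y'.1 = stmt6phi y.1 then b y' else 0)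
            (fun y' hy' => by
              split
              · exact hb0 y' hy'
              · exact le_refl 0) hy
          simpa using hs
        have := hb0 y hy
        linarith [hle, hl ▸ hle]
      -- the coupling weights
      set μ : (((Fin n → ℝ) × (Fin m1 → ℝ) × ((Fin n → Bool) → ℝ)) ×
          ((Fin n → ℝ) × (Fin m2 → ℝ) × ((Fin n → Bool) → ℝ))) → ℝ :=
        fun yz => if stmt6phi yz.2.1 = stmt6phi yz.1.1 then
          a yz.1 * b yz.2 / z1.2.2 (stmt6phi yz.1.1) else 0 with hμ
      have μ0 : ∀ yz ∈ s1 ×ˢ s2, 0 ≤ μ yz := by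
        intro yz hyz
        rw [Finset.mem_product] at hyz
        rw [hμ]
        dsimp only
        split
        · exact div_nonneg (mul_nonneg (ha0 _ hyz.1) (hb0 _ hyz.2)) (lam0 _)
        · exact le_refl 0
      -- row and column sums of the coupling
      have C1 : ∀ y1 ∈ s1, ∑ y2 ∈ s2, μ (y1, y2) = a y1 := by
        intro y1 hy1
        have hfac : ∀ y2, μ (y1, y2) = (a y1 / z1.2.2 (stmt6phi y1.1)) *
            (if stmt6phi y2.1 = stmt6phi y1.1 then b y2 else 0) := by
          intro y2
          rw [hμ]
          dsimp only
          split
          · ring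
          · ring
        rw [Finset.sum_congr rfl fun y2 _ => hfac y2, ← Finset.mul_sum,
          M2 (stmt6phi y1.1)]
        by_cases hl : z1.2.2 (stmt6phi y1.1) = 0
        · rw [hl, avanish y1 hy1 hl]; ring
        · rw [div_mul_cancel₀ _ hl]
      have C2 : ∀ y2 ∈ s2, ∑ y1 ∈ s1, μ (y1, y2) = b y2 := by
        intro y2 hy2
        have hfac : ∀ y1, μ (y1, y2) = (b y2 / z1.2.2 (stmt6phi y2.1)) *
            (if stmt6phi y1.1 = stmt6phi y2.1 then a y1 else 0) := by
          intro y1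
          rw [hμ]
          dsimp only
          by_cases h : stmt6phi y2.1 = stmt6phi y1.1
          · rw [if_pos h, if_pos h.symm, ← h]; ring
          · rw [if_neg h, if_neg fun hh => h hh.symm]; ring
        rw [Finset.sum_congr rfl fun y1 _ => hfac y1, ← Finset.mul_sum,
          M1 (stmt6phi y2.1)]
        by_cases hl : z1.2.2 (stmt6phi y2.1) = 0
        · rw [hl, bvanish y2 hy2 hl]; ring
        · rw [div_mul_cancel₀ _ hl]
      -- the support of the coupling
      set tset := (s1 ×ˢ s2).filter
        (fun yz => stmt6phi yz.2.1 = stmt6phi yz.1.1) with htset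
      have hμt : ∀ (M : Type) (_ : AddCommMonoid M) (_ : Module ℝ M)
          (g : (((Fin n → ℝ) × (Fin m1 → ℝ) × ((Fin n → Bool) → ℝ)) ×
          ((Fin n → ℝ) × (Fin m2 → ℝ) × ((Fin n → Bool) → ℝ))) → M),
          ∑ yz ∈ tset, μ yz • g yz = ∑ yz ∈ s1 ×ˢ s2, μ yz • g yz := by
        intro M _ _ g
        apply Finset.sum_subset (Finset.filter_subset _ _)
        intro yz hyz hnt
        have hne : ¬ (stmt6phi yz.2.1 = stmt6phi yz.1.1) := by
          intro hc
          exact hnt (Finset.mem_filter.2 ⟨hyz, hc⟩)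
        rw [hμ]
        dsimp only
        rw [if_neg hne, zero_smul]
      have hsum1 : ∑ yz ∈ tset, μ yz = 1 := by
        have h := hμt ℝ inferInstance inferInstance (fun _ => (1:ℝ))
        simp only [smul_eq_mul, mul_one] at h
        rw [h, Finset.sum_product]
        rw [Finset.sum_congr rfl C1]
        exact ha1
      have key : tset.centerMass μ id = (z1, z2) := by
        rw [Finset.centerMass_eq_of_sum_1 _ _ hsum1]
        have hfst : (∑ yz ∈ tset, μ yz • id yz).1 = z1 := by
          rw [Prod.fst_sum]
          have hstep : ∑ yz ∈ tset, (μ yz • id yz).1 = ∑ yz ∈ tset, μ yz • yz.1 :=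
            Finset.sum_congr rfl fun yz _ => rfl
          rw [hstep, hμt _ inferInstance inferInstance (fun yz => yz.1),
            Finset.sum_product]
          refine Eq.trans (Finset.sum_congr rfl ?_) hasum
          intro y1 hy1
          rw [← Finset.sum_smul, C1 y1 hy1]
        have hsnd : (∑ yz ∈ tset, μ yz • id yz).2 = z2 := by
          rw [Prod.snd_sum]
          have hstep : ∑ yz ∈ tset, (μ yz • id yz).2 = ∑ yz ∈ tset, μ yz • yz.2 :=
            Finset.sum_congr rfl fun yz _ => rfl
          rw [hstep, hμt _ inferInstance inferInstance (fun yz => yz.2),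
            Finset.sum_product_right]
          refine Eq.trans (Finset.sum_congr rfl ?_) hbsum
          intro y2 hy2
          rw [← Finset.sum_smul, C2 y2 hy2]
        exact Prod.ext hfst hsnd
      have hz : ∀ yz ∈ tset, yz ∈ {z : (((Fin n → ℝ) × (Fin m1 → ℝ) ×
          ((Fin n → Bool) → ℝ)) × ((Fin n → ℝ) × (Fin m2 → ℝ) ×
          ((Fin n → Bool) → ℝ))) | z.1 ∈ XV1 ∧ z.2 ∈ XV2 ∧ z.1.1 = z.2.1} := by
        intro yz hyz
        rw [htset, Finset.mem_filter, Finset.mem_product] at hyz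
        obtain ⟨⟨hy1, hy2⟩, hphi⟩ := hyz
        refine ⟨by rw [hs1, Set.Finite.mem_toFinset] at hy1; exact hy1,
          by rw [hs2, Set.Finite.mem_toFinset] at hy2; exact hy2, ?_⟩
        have h01a := (fact1 _ hy1).1
        have h01b := (fact2 _ hy2).1
        calc yz.1.1 = stmt6toR (stmt6phi yz.1.1) := (stmt6_toR_phi h01a).symm
          _ = stmt6toR (stmt6phi yz.2.1) := by rw [← hphi]
          _ = yz.2.1 := stmt6_toR_phi h01b
      rw [hBdef, ← key]
      exact Finset.centerMass_mem_convexHull tset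
        (fun yz hyz => μ0 yz (Finset.filter_subset _ _ hyz))
        (by rw [hsum1]; exact one_pos) hz
    · -- B ⊆ A : easy direction
      apply convexHull_min
      · rintro ⟨z1, z2⟩ ⟨h1, h2, hx⟩
        refine ⟨subset_convexHull ℝ _ h1, subset_convexHull ℝ _ h2, hx, ?_⟩
        obtain ⟨p, hp, rfl⟩ := h1
        obtain ⟨q, hq, rfl⟩ := h2
        simp only at hx ⊢
        rw [hx]
      · intro u hu v hv α β hα hβ hαβ
        refine ⟨?_, ?_, ?_, ?_⟩
        · exact (convex_convexHull ℝ XV1) hu.1 hv.1 hα hβ hαβ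
        · exact (convex_convexHull ℝ XV2) hu.2.1 hv.2.1 hα hβ hαβ
        · show α • u.1.1 + β • v.1.1 = α • u.2.1 + β • v.2.1
          rw [hu.2.2.1, hv.2.2.1]
        · show α • u.1.2.2 + β • v.1.2.2 = α • u.2.2.2 + β • v.2.2.2
          rw [hu.2.2.2, hv.2.2.2]
  exact ⟨hAB, fun c => by rw [hAB]⟩
end

section
/- Fix ε > 0 and n ≥ 3. Consider the function on pairs (v_1, v_2) ∈ ({0,1}^n)² given by g(v_1, v_2) = −ε⟨1, v_1⟩ + ε⟨1, v_2⟩. For any subset V ⊆ {0,1}^n with |V| ≤ 2^{n−2} − 1, there exist v_1, v_2 ∈ {0,1}^n \ V with v_1 ≥ v_2 componentwise and ‖v_1 − v_2‖_0 ≥ 2, and hence min over (v_1, v_2) ∈ ({0,1}^n \ V)² of g(v_1, v_2) ≤ −2ε. -/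
/-- If at most `2^(n-2) - 1` vertices are removed, there remain comparable
binary vectors differing in at least two coordinates, so the SDA lower bound is
at most `-2ε`. -/
theorem stmt11 (n : ℕ) (hn : 3 ≤ n) (ε : ℝ) (hε : 0 < ε)
    (V : Finset (Fin n → Bool)) (hV : V.card ≤ 2 ^ (n - 2) - 1) :
    (∃ v1 v2 : Fin n → Bool, v1 ∉ V ∧ v2 ∉ V ∧
        (∀ j, v2 j = true → v1 j = true) ∧
        2 ≤ (Finset.univ.filter fun j => v1 j ≠ v2 j).card) ∧
      sInf {x : ℝ | ∃ v1 ∉ V, ∃ v2 ∉ V,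
          x = -ε * (∑ j, if v1 j then (1 : ℝ) else 0)
            + ε * (∑ j, if v2 j then (1 : ℝ) else 0)}
        ≤ -2 * ε := by
  have h0 : (0:ℕ) < n := by omega
  have h1 : (1:ℕ) < n := by omega
  set i0 : Fin n := ⟨0, h0⟩ with hi0
  set i1 : Fin n := ⟨1, h1⟩ with hi1
  have hi : i0 ≠ i1 := by simp [hi0, hi1, Fin.ext_iff]
  set up : (Fin n → Bool) → (Fin n → Bool) :=
    fun w j => if j = i0 ∨ j = i1 then true else w j with hup
  set S : Finset (Fin n → Bool) :=
    Finset.univ.filter (fun w => w i0 = false ∧ w i1 = false) with hS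
  -- S has at least 2^(n-2) elements
  have hScard : 2 ^ (n-2) ≤ S.card := by
    have := Finset.card_le_card_of_injOn
      (f := fun (u : Fin (n-2) → Bool) (j : Fin n) =>
        if h : 2 ≤ (j : ℕ) then u ⟨(j : ℕ) - 2, by omega⟩ else false)
      (s := Finset.univ) (t := S)
      (by
        intro u _
        simp only [hS, Finset.mem_coe, Finset.mem_filter, Finset.mem_univ, true_and]
        constructor <;> simp [hi0, hi1])
      (by
        intro u _ u' _ h
        funext k
        have := congrFun h ⟨(k : ℕ) + 2, by omega⟩
        simpa using this)
    simpa using this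
  -- up is injective on S, and up w ≠ w' for w, w' in S
  have hupS : ∀ w ∈ S, ∀ w' ∈ S, up w = up w' → w = w' := by
    intro w hw w' hw' h
    simp only [hS, Finset.mem_filter] at hw hw'
    funext j
    by_cases hj : j = i0 ∨ j = i1
    · rcases hj with hj | hj <;> subst hj <;>
        simp [hw.2.1, hw'.2.1, hw.2.2, hw'.2.2]
    · push_neg at hj
      have := congrFun h j
      simpa [hup, hj.1, hj.2] using this
  -- find a good pair
  have hgood : ∃ w ∈ S, w ∉ V ∧ up w ∉ V := by
    by_contra hcon
    push_neg at hcon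
    have hinj : S.card ≤ V.card := by
      apply Finset.card_le_card_of_injOn
        (f := fun w => if w ∈ V then w else up w)
      · intro w hw
        by_cases h : w ∈ V
        · simp only [if_pos h]; exact h
        · have := hcon w hw h
          simpa [h] using this
      · intro w hw w' hw' h
        simp only at h
        have hwm : w ∈ S := hw
        have hw'm : w' ∈ S := hw'
        have hwS : w i0 = false ∧ w i1 = false := by
          have := hwm; simp only [hS, Finset.mem_filter] at this; exact this.2
        have hw'S : w' i0 = false ∧ w' i1 = false := by
          have := hw'm; simp only [hS, Finset.mem_filter] at this; exact this.2
        by_cases h1 : w ∈ V <;> by_cases h2 : w' ∈ V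
        · simpa [h1, h2] using h
        · exfalso
          rw [if_pos h1, if_neg h2] at h
          have := congrFun h i0
          simp [hup, hwS.1] at this
        · exfalso
          rw [if_neg h1, if_pos h2] at h
          have := congrFun h i0
          simp [hup, hw'S.1] at this
        · rw [if_neg h1, if_neg h2] at h
          exact hupS w hwm w' hw'm h
    have hp : 0 < 2 ^ (n-2) := Nat.pow_pos (by norm_num)
    omega
  obtain ⟨w, hwS, hwV, hupwV⟩ := hgood
  have hwS' := hwS
  simp only [hS, Finset.mem_filter] at hwS'
  have hw0 : w i0 = false := hwS'.2.1
  have hw1 : w i1 = false := hwS'.2.2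
  have hup0 : up w i0 = true := by simp [hup]
  have hup1 : up w i1 = true := by simp [hup]
  constructor
  · refine ⟨up w, w, hupwV, hwV, ?_, ?_⟩
    · intro j hj
      by_cases h : j = i0 ∨ j = i1 <;> simp [hup, h, hj]
    · have hsub : ({i0, i1} : Finset (Fin n)) ⊆
          Finset.univ.filter fun j => up w j ≠ w j := by
        intro j hj
        simp only [Finset.mem_insert, Finset.mem_singleton] at hj
        rcases hj with hj | hj <;> subst hj <;>
          simp [hup0, hup1, hw0, hw1]
      calc 2 = ({i0, i1} : Finset (Fin n)).card := (Finset.card_pair hi).symm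
        _ ≤ _ := Finset.card_le_card hsub
  · -- sInf bound
    have hsum : (∑ j, if up w j then (1:ℝ) else 0)
        = (∑ j, if w j then (1:ℝ) else 0) + 2 := by
      have key : ∀ j : Fin n, (if up w j then (1:ℝ) else 0)
          = (if w j then (1:ℝ) else 0)
            + ((if j = i0 then (1:ℝ) else 0) + (if j = i1 then (1:ℝ) else 0)) := by
        intro j
        by_cases hj : j = i0
        · subst hj; simp [hup0, hw0, hi]
        · by_cases hj' : j = i1
          · subst hj'; simp [hup1, hw1, hj]
          · have : up w j = w j := by simp [hup, hj, hj']
            simp [this, hj, hj']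
      rw [Finset.sum_congr rfl (fun j _ => key j)]
      rw [Finset.sum_add_distrib, Finset.sum_add_distrib]
      simp
      norm_num
    have hmem : (-2 * ε) ∈ {x : ℝ | ∃ v1 ∉ V, ∃ v2 ∉ V,
          x = -ε * (∑ j, if v1 j then (1 : ℝ) else 0)
            + ε * (∑ j, if v2 j then (1 : ℝ) else 0)} := by
      refine ⟨up w, hupwV, w, hwV, ?_⟩
      rw [hsum]; ring
    have hbdd : BddBelow {x : ℝ | ∃ v1 ∉ V, ∃ v2 ∉ V,
          x = -ε * (∑ j, if v1 j then (1 : ℝ) else 0)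
            + ε * (∑ j, if v2 j then (1 : ℝ) else 0)} := by
      refine ⟨-ε * n, ?_⟩
      rintro x ⟨v1, _, v2, _, rfl⟩
      have hS1 : (∑ j, if v1 j then (1:ℝ) else 0) ≤ n := by
        calc (∑ j, if v1 j then (1:ℝ) else 0) ≤ ∑ _j : Fin n, (1:ℝ) := by
              apply Finset.sum_le_sum
              intro j _
              by_cases h : v1 j <;> simp [h]
          _ = n := by simp
      have hS2 : (0:ℝ) ≤ (∑ j, if v2 j then (1:ℝ) else 0) := by
        apply Finset.sum_nonneg
        intro j _
        by_cases h : v2 j <;> simp [h]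
      nlinarith
    exact csInf_le hbdd hmem
end

section
/- Let X^{(1)} ⊆ R^{n} × R^{m_1} and X^{(2)} ⊆ R^{n} × R^{m_2} be finite sets, F^{(1)} : R^n → R affine, and F^{(2)} : R^n → R an arbitrary function, such that F^{(1)}(x) + F^{(2)}(x) ≥ 0 for all x with (x, y^1) ∈ X^{(1)} and (x, y^2) ∈ X^{(2)} for some y^1, y^2 (i.e., the constraint is valid whenever x^{(1)} = x^{(2)} is jointly feasible in x-coordinates). Define X_ex^{(i)} = { (x, y, F^{(i)}(x)) : (x, y) ∈ X^{(i)} }. Then for any points (x^i, y^i, w^i) ∈ conv(X_ex^{(i)}), i = 1, 2, with x^1 = x^2, one has w^1 + w^2 ≥ 0. In particular, adding the dualized redundant constraint w^1 + w^2 ≥ 0 does not change the Lagrangian dual bound. -/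
/-- Dualizing a redundant constraint `F¹(x¹) + F²(x²) ≥ 0` with `F¹` affine
does not cut off any point of the coupled convex hull relaxation: the
inequality `w¹ + w² ≥ 0` holds automatically. -/
theorem stmt12 {n m1 m2 : ℕ}
    (X1 : Set ((Fin n → ℝ) × (Fin m1 → ℝ))) (X2 : Set ((Fin n → ℝ) × (Fin m2 → ℝ)))
    (hX1 : X1.Finite) (hX2 : X2.Finite)
    (F1 : (Fin n → ℝ) →ᵃ[ℝ] ℝ) (F2 : (Fin n → ℝ) → ℝ)
    (hvalid : ∀ x : Fin n → ℝ, (∃ y2, (x, y2) ∈ X2) → 0 ≤ F1 x + F2 x)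
    (p1 : (Fin n → ℝ) × (Fin m1 → ℝ) × ℝ) (p2 : (Fin n → ℝ) × (Fin m2 → ℝ) × ℝ)
    (hp1 : p1 ∈ convexHull ℝ {q : (Fin n → ℝ) × (Fin m1 → ℝ) × ℝ |
      ∃ xy ∈ X1, q = (xy.1, xy.2, F1 xy.1)})
    (hp2 : p2 ∈ convexHull ℝ {q : (Fin n → ℝ) × (Fin m2 → ℝ) × ℝ |
      ∃ xy ∈ X2, q = (xy.1, xy.2, F2 xy.1)})
    (heq : p1.1 = p2.1) :
    0 ≤ p1.2.2 + p2.2.2 := by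
  -- affine map q ↦ q.2.2 - F1 q.1 on the first space
  set A1 : ((Fin n → ℝ) × (Fin m1 → ℝ) × ℝ) →ᵃ[ℝ] ℝ :=
    ((LinearMap.snd ℝ (Fin m1 → ℝ) ℝ).comp
      (LinearMap.snd ℝ (Fin n → ℝ) ((Fin m1 → ℝ) × ℝ))).toAffineMap -
    F1.comp (LinearMap.fst ℝ (Fin n → ℝ) ((Fin m1 → ℝ) × ℝ)).toAffineMap with hA1
  -- affine map q ↦ q.2.2 + F1 q.1 on the second space
  set A2 : ((Fin n → ℝ) × (Fin m2 → ℝ) × ℝ) →ᵃ[ℝ] ℝ :=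
    ((LinearMap.snd ℝ (Fin m2 → ℝ) ℝ).comp
      (LinearMap.snd ℝ (Fin n → ℝ) ((Fin m2 → ℝ) × ℝ))).toAffineMap +
    F1.comp (LinearMap.fst ℝ (Fin n → ℝ) ((Fin m2 → ℝ) × ℝ)).toAffineMap with hA2
  have h1 : p1 ∈ A1 ⁻¹' ({0} : Set ℝ) := by
    refine convexHull_min ?_ ((convex_singleton (0 : ℝ)).affine_preimage A1) hp1
    rintro q ⟨xy, hxy, rfl⟩
    simp [hA1]
  have h2 : p2 ∈ A2 ⁻¹' (Set.Ici (0 : ℝ)) := by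
    refine convexHull_min ?_ ((convex_Ici (0 : ℝ)).affine_preimage A2) hp2
    rintro q ⟨xy, hxy, rfl⟩
    have := hvalid xy.1 ⟨xy.2, hxy⟩
    simp [hA2]
    linarith
  simp only [hA1, hA2, Set.mem_preimage, Set.mem_singleton_iff, Set.mem_Ici,
    AffineMap.coe_sub, AffineMap.coe_add, Pi.sub_apply, Pi.add_apply, AffineMap.comp_apply,
    LinearMap.coe_toAffineMap, LinearMap.comp_apply, LinearMap.snd_apply,
    LinearMap.fst_apply] at h1 h2
  rw [heq] at h1
  linarith
end

section
/- Let X^{(1)}, X^{(2)} be finite subsets of {0,1}^n, and for each i and each x ∈ X^{(i)} define the full monomial vector m(x) ∈ R^{2^n} by m(x)_S = ∏_{j∈S} x_j. Then the set { (x^1, m(x^1), x^2, m(x^2)) : x^i ∈ X^{(i)}, m(x^1) = m(x^2) } has the same convex hull as the set { (x^1, w^1, x^2, w^2) : (x^i, w^i) ∈ conv({(x, m(x)) : x ∈ X^{(i)}}), w^1 = w^2 }; in particular both project in the x-coordinates to conv({ (x, x) : x ∈ X^{(1)} ∩ X^{(2)} }). -/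
open Finset

noncomputable def msupp {n : ℕ} (z : Fin n → ℝ) : Finset (Fin n) :=
  Finset.univ.filter fun j => z j = 1

lemma mem_msupp {n : ℕ} {z : Fin n → ℝ} {j : Fin n} : j ∈ msupp z ↔ z j = 1 := by
  simp [msupp]

lemma key_sum {n : ℕ} (x z : Fin n → ℝ) (hx : ∀ j, x j = 0 ∨ x j = 1)
    (hz : ∀ j, z j = 0 ∨ z j = 1) :
    ∑ T ∈ (msupp z)ᶜ.powerset, (-1 : ℝ) ^ T.card * ∏ j ∈ msupp z ∪ T, x j
      = if x = z then 1 else 0 := by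
  classical
  have h1 : ∀ T ∈ (msupp z)ᶜ.powerset, (-1 : ℝ) ^ T.card * ∏ j ∈ msupp z ∪ T, x j
      = (∏ j ∈ msupp z, x j) * ((-1 : ℝ) ^ T.card * ∏ j ∈ T, x j) := by
    intro T hT
    rw [mem_powerset] at hT
    have hd : Disjoint (msupp z) T :=
      (disjoint_compl_right.mono_right hT : _)
    rw [prod_union hd]; ring
  rw [Finset.sum_congr rfl h1, ← Finset.mul_sum]
  have h2 : ∑ T ∈ (msupp z)ᶜ.powerset, (-1 : ℝ) ^ T.card * ∏ j ∈ T, x j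
      = ∏ j ∈ (msupp z)ᶜ, (1 - x j) := by
    have key := Finset.prod_add (fun j => -x j) (fun _ => (1 : ℝ)) (msupp z)ᶜ
    simp only [prod_const_one, mul_one] at key
    have h3 : ∀ T : Finset (Fin n), ∏ j ∈ T, (-x j) = (-1 : ℝ) ^ T.card * ∏ j ∈ T, x j := by
      intro T
      rw [← prod_const (-1 : ℝ), ← prod_mul_distrib]
      exact Finset.prod_congr rfl fun j _ => by ring
    simp only [h3] at key
    rw [← key]
    exact Finset.prod_congr rfl fun j _ => by ring
  rw [h2]
  by_cases hxz : x = z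
  · subst hxz
    rw [if_pos rfl]
    have e1 : ∏ j ∈ msupp x, x j = 1 :=
      Finset.prod_eq_one fun j hj => mem_msupp.mp hj
    have e2 : ∏ j ∈ (msupp x)ᶜ, (1 - x j) = 1 := by
      refine Finset.prod_eq_one fun j hj => ?_
      rcases hx j with h | h
      · rw [h]; ring
      · exact absurd (mem_msupp.mpr h) (mem_compl.mp hj)
    rw [e1, e2]; norm_num
  · rw [if_neg hxz]
    obtain ⟨j, hj⟩ : ∃ j, x j ≠ z j := by
      by_contra h
      push_neg at h
      exact hxz (funext h)
    rcases hx j with h0 | h1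
    · rcases hz j with hz0 | hz1
      · exact absurd (h0.trans hz0.symm) hj
      · have : j ∈ msupp z := mem_msupp.mpr hz1
        rw [Finset.prod_eq_zero this h0, zero_mul]
    · rcases hz j with hz0 | hz1
      · have : j ∈ (msupp z)ᶜ := by
          rw [mem_compl, mem_msupp, hz0]; norm_num
        rw [Finset.prod_eq_zero this (by rw [h1]; ring), mul_zero]
      · exact absurd (h1.trans hz1.symm) hj

lemma side_sum {n : ℕ} (z : Fin n → ℝ) (hz : ∀ j, z j = 0 ∨ z j = 1)
    (u : Finset (Fin n → ℝ)) (w : (Fin n → ℝ) → ℝ)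
    (hu : ∀ x ∈ u, ∀ j, x j = 0 ∨ x j = 1) :
    ∑ T ∈ (msupp z)ᶜ.powerset, (-1 : ℝ) ^ T.card *
        ∑ x ∈ u, w x * ∏ j ∈ msupp z ∪ T, x j
      = (if z ∈ u then w z else 0) := by
  classical
  calc ∑ T ∈ (msupp z)ᶜ.powerset, (-1 : ℝ) ^ T.card *
        ∑ x ∈ u, w x * ∏ j ∈ msupp z ∪ T, x j
      = ∑ T ∈ (msupp z)ᶜ.powerset, ∑ x ∈ u,
          w x * ((-1 : ℝ) ^ T.card * ∏ j ∈ msupp z ∪ T, x j) := by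
        refine Finset.sum_congr rfl fun T _ => ?_
        rw [Finset.mul_sum]
        exact Finset.sum_congr rfl fun x _ => by ring
    _ = ∑ x ∈ u, w x * ∑ T ∈ (msupp z)ᶜ.powerset,
          (-1 : ℝ) ^ T.card * ∏ j ∈ msupp z ∪ T, x j := by
        rw [Finset.sum_comm]
        exact Finset.sum_congr rfl fun x _ => by rw [Finset.mul_sum]
    _ = ∑ x ∈ u, w x * (if x = z then 1 else 0) := by
        refine Finset.sum_congr rfl fun x hx => ?_
        rw [key_sum x z (hu x hx) hz]
    _ = ∑ x ∈ u, (if x = z then w x else 0) := by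
        refine Finset.sum_congr rfl fun x _ => ?_
        split <;> simp
    _ = if z ∈ u then w z else 0 := Finset.sum_ite_eq' u z w

lemma weights_eq {n : ℕ} (s t : Finset (Fin n → ℝ))
    (hs : ∀ x ∈ s, ∀ j, x j = 0 ∨ x j = 1)
    (ht : ∀ y ∈ t, ∀ j, y j = 0 ∨ y j = 1)
    (l μ : (Fin n → ℝ) → ℝ)
    (h : ∀ S : Finset (Fin n),
      ∑ x ∈ s, l x * ∏ j ∈ S, x j = ∑ y ∈ t, μ y * ∏ j ∈ S, y j)
    (z : Fin n → ℝ) (hz : ∀ j, z j = 0 ∨ z j = 1) :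
    (if z ∈ s then l z else 0) = (if z ∈ t then μ z else 0) := by
  classical
  rw [← side_sum z hz s l hs, ← side_sum z hz t μ ht]
  exact Finset.sum_congr rfl fun T _ => by rw [h]

noncomputable def mon {n : ℕ} (x : Fin n → ℝ) : Finset (Fin n) → ℝ := fun S => ∏ j ∈ S, x j

lemma rep_lemma {n : ℕ} (X : Set (Fin n → ℝ)) (hX : X.Finite)
    (p : (Fin n → ℝ) × (Finset (Fin n) → ℝ))
    (hp : p ∈ convexHull ℝ {q | ∃ x ∈ X, q = (x, mon x)}) :
    ∃ l : (Fin n → ℝ) → ℝ, (∀ x ∈ X, 0 ≤ l x) ∧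
      ∑ x ∈ hX.toFinset, l x = 1 ∧
      ∑ x ∈ hX.toFinset, l x • ((x, mon x) : (Fin n → ℝ) × (Finset (Fin n) → ℝ)) = p := by
  classical
  have hset : {q | ∃ x ∈ X, q = (x, mon x)} = (fun x => (x, mon x)) '' X := by
    ext q
    constructor
    · rintro ⟨x, hx, rfl⟩; exact ⟨x, hx, rfl⟩
    · rintro ⟨x, hx, rfl⟩; exact ⟨x, hx, rfl⟩
  have hfin : ((fun x : Fin n → ℝ => (x, mon x)) '' X).Finite := hX.image _
  rw [hset, hfin.convexHull_eq] at hp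
  obtain ⟨w, hw0, hw1, hwc⟩ := hp
  have hinj : Set.InjOn (fun x : Fin n → ℝ => (x, mon x)) hX.toFinset := by
    intro a _ b _ h
    exact congrArg Prod.fst h
  have htf : hfin.toFinset = hX.toFinset.image (fun x => (x, mon x)) := by
    ext q; simp [Set.Finite.mem_toFinset]
  rw [Finset.centerMass_eq_of_sum_1 _ _ hw1] at hwc
  rw [htf] at hw1 hwc
  rw [Finset.sum_image hinj] at hw1
  rw [Finset.sum_image hinj] at hwc
  refine ⟨fun x => w (x, mon x), fun x hx => hw0 _ ⟨x, hx, rfl⟩, hw1, ?_⟩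
  simpa using hwc

lemma stmt15_aux {n : ℕ} (X1 X2 : Set (Fin n → ℝ))
    (hX1 : X1.Finite) (hX2 : X2.Finite)
    (hb1 : ∀ x ∈ X1, ∀ j, x j = 0 ∨ x j = 1)
    (hb2 : ∀ x ∈ X2, ∀ j, x j = 0 ∨ x j = 1) :
    convexHull ℝ {p : ((Fin n → ℝ) × (Finset (Fin n) → ℝ)) ×
        ((Fin n → ℝ) × (Finset (Fin n) → ℝ)) |
        ∃ x1 ∈ X1, ∃ x2 ∈ X2, mon x1 = mon x2 ∧ p = ((x1, mon x1), (x2, mon x2))}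
      = convexHull ℝ {p : ((Fin n → ℝ) × (Finset (Fin n) → ℝ)) ×
        ((Fin n → ℝ) × (Finset (Fin n) → ℝ)) |
        p.1 ∈ convexHull ℝ {q | ∃ x ∈ X1, q = (x, mon x)} ∧
        p.2 ∈ convexHull ℝ {q | ∃ x ∈ X2, q = (x, mon x)} ∧ p.1.2 = p.2.2} ∧
      (fun p : ((Fin n → ℝ) × (Finset (Fin n) → ℝ)) ×
          ((Fin n → ℝ) × (Finset (Fin n) → ℝ)) => (p.1.1, p.2.1)) ''
        {p : ((Fin n → ℝ) × (Finset (Fin n) → ℝ)) ×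
        ((Fin n → ℝ) × (Finset (Fin n) → ℝ)) |
        p.1 ∈ convexHull ℝ {q | ∃ x ∈ X1, q = (x, mon x)} ∧
        p.2 ∈ convexHull ℝ {q | ∃ x ∈ X2, q = (x, mon x)} ∧ p.1.2 = p.2.2}
        = convexHull ℝ {q : (Fin n → ℝ) × (Fin n → ℝ) | ∃ x ∈ X1 ∩ X2, q = (x, x)} := by
  classical
  set E := (Fin n → ℝ) × (Finset (Fin n) → ℝ) with hE
  set A : Set (E × E) :=
    {p | ∃ x1 ∈ X1, ∃ x2 ∈ X2, mon x1 = mon x2 ∧ p = ((x1, mon x1), (x2, mon x2))} with hA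
  set B : Set (E × E) :=
    {p | p.1 ∈ convexHull ℝ {q | ∃ x ∈ X1, q = (x, mon x)} ∧
        p.2 ∈ convexHull ℝ {q | ∃ x ∈ X2, q = (x, mon x)} ∧ p.1.2 = p.2.2} with hB
  -- m is injective on binary vectors
  have hinj : ∀ x1 x2 : Fin n → ℝ, mon x1 = mon x2 → x1 = x2 := by
    intro x1 x2 h
    funext j
    have := congrFun h {j}
    simpa [mon] using this
  -- A ⊆ B
  have hAB : A ⊆ B := by
    rintro p ⟨x1, hx1, x2, hx2, hm, rfl⟩
    exact ⟨subset_convexHull ℝ _ ⟨x1, hx1, rfl⟩, subset_convexHull ℝ _ ⟨x2, hx2, rfl⟩, hm⟩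
  -- B is convex
  have hBconv : Convex ℝ B := by
    rintro p ⟨hp1, hp2, hp3⟩ q ⟨hq1, hq2, hq3⟩ a b ha hb hab
    refine ⟨(convex_convexHull ℝ _) hp1 hq1 ha hb hab,
      (convex_convexHull ℝ _) hp2 hq2 ha hb hab, ?_⟩
    show a • p.1.2 + b • q.1.2 = a • p.2.2 + b • q.2.2
    rw [hp3, hq3]
  -- B ⊆ convexHull A
  have hBA : B ⊆ convexHull ℝ A := by
    rintro p ⟨hp1, hp2, hp3⟩
    obtain ⟨l, hl0, hl1, hlc⟩ := rep_lemma X1 hX1 p.1 hp1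
    obtain ⟨μ, hμ0, hμ1, hμc⟩ := rep_lemma X2 hX2 p.2 hp2
    set s1 := hX1.toFinset with hs1
    set s2 := hX2.toFinset with hs2
    have hmem1 : ∀ x ∈ s1, x ∈ X1 := fun x hx => hX1.mem_toFinset.mp hx
    have hmem2 : ∀ x ∈ s2, x ∈ X2 := fun x hx => hX2.mem_toFinset.mp hx
    -- the monomial parts agree
    have hfun : ∀ S : Finset (Fin n),
        ∑ x ∈ s1, l x * ∏ j ∈ S, x j = ∑ y ∈ s2, μ y * ∏ j ∈ S, y j := by
      intro S
      have h1 : p.1.2 = ∑ x ∈ s1, l x • mon x := by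
        rw [← hlc, Prod.snd_sum]
        exact Finset.sum_congr rfl fun x _ => rfl
      have h2 : p.2.2 = ∑ y ∈ s2, μ y • mon y := by
        rw [← hμc, Prod.snd_sum]
        exact Finset.sum_congr rfl fun y _ => rfl
      have := congrFun (h1.symm.trans (hp3.trans h2)) S
      simpa [mon, Finset.sum_apply] using this
    have hwz : ∀ z : Fin n → ℝ, (∀ j, z j = 0 ∨ z j = 1) →
        (if z ∈ s1 then l z else 0) = (if z ∈ s2 then μ z else 0) :=
      weights_eq s1 s2 (fun x hx => hb1 x (hmem1 x hx)) (fun y hy => hb2 y (hmem2 y hy))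
        l μ hfun
    have hzero1 : ∀ x ∈ s1, x ∉ s2 → l x = 0 := by
      intro x hx hnx
      have := hwz x (hb1 x (hmem1 x hx))
      rwa [if_pos hx, if_neg hnx] at this
    have hzero2 : ∀ y ∈ s2, y ∉ s1 → μ y = 0 := by
      intro y hy hny
      have := hwz y (hb2 y (hmem2 y hy))
      rw [if_pos hy, if_neg hny] at this
      exact this.symm
    have hlmu : ∀ x ∈ s1 ∩ s2, l x = μ x := by
      intro x hx
      rw [Finset.mem_inter] at hx
      have := hwz x (hb1 x (hmem1 x hx.1))
      rwa [if_pos hx.1, if_pos hx.2] at this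
    set s := s1 ∩ s2 with hsdef
    -- restrict sums to the intersection
    have hsum_l : ∑ x ∈ s, l x = 1 := by
      rw [← hl1]
      refine Finset.sum_subset Finset.inter_subset_left ?_
      intro x hx hnx
      exact hzero1 x hx (fun h2 => hnx (Finset.mem_inter.mpr ⟨hx, h2⟩))
    have hp1' : ∑ x ∈ s, l x • ((x, mon x) : E) = p.1 := by
      rw [← hlc]
      refine Finset.sum_subset Finset.inter_subset_left ?_
      intro x hx hnx
      rw [hzero1 x hx (fun h2 => hnx (Finset.mem_inter.mpr ⟨hx, h2⟩)), zero_smul]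
    have hp2' : ∑ x ∈ s, l x • ((x, mon x) : E) = p.2 := by
      rw [← hμc]
      rw [Finset.sum_congr rfl (fun x hx => by rw [hlmu x hx])]
      refine Finset.sum_subset Finset.inter_subset_right ?_
      intro y hy hny
      rw [hzero2 y hy (fun h1 => hny (Finset.mem_inter.mpr ⟨h1, hy⟩)), zero_smul]
    have hp : p = ∑ x ∈ s, l x • ((((x, mon x), (x, mon x))) : E × E) := by
      have : (∑ x ∈ s, l x • ((((x, mon x), (x, mon x))) : E × E))
          = (∑ x ∈ s, l x • ((x, mon x) : E), ∑ x ∈ s, l x • ((x, mon x) : E)) := by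
        rw [Prod.ext_iff]
        constructor
        · simp only [Prod.fst_sum, Prod.smul_fst]
        · simp only [Prod.snd_sum, Prod.smul_snd]
      have h12 : p.1 = p.2 := hp1'.symm.trans hp2'
      rw [this, hp1']
      rw [Prod.ext_iff]
      exact ⟨rfl, h12.symm⟩
    rw [hp]
    have hcm : (s.centerMass l fun x => ((((x, mon x), (x, mon x))) : E × E))
        = ∑ x ∈ s, l x • ((((x, mon x), (x, mon x))) : E × E) :=
      Finset.centerMass_eq_of_sum_1 _ _ hsum_l
    rw [← hcm]
    refine Finset.centerMass_mem_convexHull s ?_ (by rw [hsum_l]; norm_num) ?_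
    · intro x hx
      exact hl0 x (hmem1 x (Finset.mem_inter.mp hx).1)
    · intro x hx
      rw [Finset.mem_inter] at hx
      exact ⟨x, hmem1 x hx.1, x, hmem2 x hx.2, rfl, rfl⟩
  -- hence B = convexHull A
  have hBeq : B = convexHull ℝ A := subset_antisymm hBA (convexHull_min hAB hBconv)
  constructor
  · rw [hBeq, (convex_convexHull ℝ A).convexHull_eq]
  · have hlin : IsLinearMap ℝ (fun p : E × E => (p.1.1, p.2.1)) :=
      ⟨fun p q => rfl, fun c p => rfl⟩
    rw [hBeq, hlin.image_convexHull]
    congr 1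
    ext q
    constructor
    · rintro ⟨p, ⟨x1, hx1, x2, hx2, hm, rfl⟩, rfl⟩
      have hx12 : x1 = x2 := hinj x1 x2 hm
      exact ⟨x1, ⟨hx1, hx12 ▸ hx2⟩, by simp [hx12]⟩
    · rintro ⟨x, ⟨hx1, hx2⟩, rfl⟩
      exact ⟨((x, mon x), (x, mon x)), ⟨x, hx1, x, hx2, rfl, rfl⟩, rfl⟩

/-- Strong duality of the full monomial (M-)Lagrangian dual in the two-block
case: the coupled relaxation with all monomial variables has the same convex
hull as the coupled integral set, and projects in the `x`-coordinates onto
`conv {(x, x) : x ∈ X₁ ∩ X₂}`. -/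
theorem stmt15 {n : ℕ} (X1 X2 : Set (Fin n → ℝ))
    (hX1 : X1.Finite) (hX2 : X2.Finite)
    (hb1 : ∀ x ∈ X1, ∀ j, x j = 0 ∨ x j = 1)
    (hb2 : ∀ x ∈ X2, ∀ j, x j = 0 ∨ x j = 1) :
    letI m : (Fin n → ℝ) → (Finset (Fin n) → ℝ) := fun x S => ∏ j ∈ S, x j
    letI A : Set (((Fin n → ℝ) × (Finset (Fin n) → ℝ)) ×
        ((Fin n → ℝ) × (Finset (Fin n) → ℝ))) :=
      {p | ∃ x1 ∈ X1, ∃ x2 ∈ X2, m x1 = m x2 ∧ p = ((x1, m x1), (x2, m x2))}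
    letI B : Set (((Fin n → ℝ) × (Finset (Fin n) → ℝ)) ×
        ((Fin n → ℝ) × (Finset (Fin n) → ℝ))) :=
      {p | p.1 ∈ convexHull ℝ {q | ∃ x ∈ X1, q = (x, m x)} ∧
           p.2 ∈ convexHull ℝ {q | ∃ x ∈ X2, q = (x, m x)} ∧ p.1.2 = p.2.2}
    convexHull ℝ A = convexHull ℝ B ∧
      (fun p : ((Fin n → ℝ) × (Finset (Fin n) → ℝ)) ×
          ((Fin n → ℝ) × (Finset (Fin n) → ℝ)) => (p.1.1, p.2.1)) '' B
        = convexHull ℝ {q : (Fin n → ℝ) × (Fin n → ℝ) | ∃ x ∈ X1 ∩ X2, q = (x, x)} :=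
  stmt15_aux X1 X2 hX1 hX2 hb1 hb2
end

section
/- Let A^1, ..., A^p ⊆ R^n be finite sets of binary vectors (A^i ⊆ {0,1}^n), and for down-closed families of index sets, consider imposing monomial-agreement constraints on convex hulls. Specifically for p = 2 and a down-closed family S ⊆ 2^{[n]} containing all singletons: the set A(S) = { (x^1, x^2) : ∃ w^i with (x^i, w^i) ∈ conv({(x, (∏_{j∈S'} x_j)_{S'∈S}) : x ∈ A^i}), w^1_{S'} = w^2_{S'} ∀ S' ∈ S } is contained in B(S) = ∩_{U ∈ S} conv({ (x^1, x^2) : x^i ∈ A^i, x^1_j = x^2_j ∀ j ∈ U }). -/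
/-- Theorem 2 of the paper in the two-block case: for a down-closed family `S`
containing all singletons, the monomial-agreement relaxation `A(S)` is
contained in `B(S)`. -/
theorem stmt16 {n : ℕ} (A1 A2 : Set (Fin n → ℝ)) (hA1 : A1.Finite) (hA2 : A2.Finite)
    (hb1 : ∀ x ∈ A1, ∀ j, x j = 0 ∨ x j = 1)
    (hb2 : ∀ x ∈ A2, ∀ j, x j = 0 ∨ x j = 1)
    (S : Finset (Finset (Fin n)))
    (hdown : ∀ S' ∈ S, ∀ S'' ⊆ S', S'' ∈ S)
    (hsing : ∀ j : Fin n, ({j} : Finset (Fin n)) ∈ S) :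
    {p : (Fin n → ℝ) × (Fin n → ℝ) |
        ∃ w1 w2 : {T : Finset (Fin n) // T ∈ S} → ℝ,
          (p.1, w1) ∈ convexHull ℝ
            {q : (Fin n → ℝ) × ({T : Finset (Fin n) // T ∈ S} → ℝ) |
              ∃ x ∈ A1, q = (x, fun T => ∏ j ∈ T.1, x j)} ∧
          (p.2, w2) ∈ convexHull ℝ
            {q : (Fin n → ℝ) × ({T : Finset (Fin n) // T ∈ S} → ℝ) |
              ∃ x ∈ A2, q = (x, fun T => ∏ j ∈ T.1, x j)} ∧
          w1 = w2}
      ⊆ ⋂ U ∈ S, convexHull ℝ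
          {p : (Fin n → ℝ) × (Fin n → ℝ) |
            p.1 ∈ A1 ∧ p.2 ∈ A2 ∧ ∀ j ∈ U, p.1 j = p.2 j} := by
  rintro ⟨x1, x2⟩ ⟨w1, w2, h1, h2, hw⟩
  rw [convexHull_eq] at h1 h2
  obtain ⟨ι1, t1, lam, z1, hlam0, hlam1, hz1, hc1⟩ := h1
  obtain ⟨ι2, t2, mu, z2, hmu0, hmu1, hz2, hc2⟩ := h2
  rw [Finset.centerMass_eq_of_sum_1 _ _ hlam1] at hc1
  rw [Finset.centerMass_eq_of_sum_1 _ _ hmu1] at hc2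
  set a : ι1 → Fin n → ℝ := fun i => (z1 i).1 with hadef
  set b : ι2 → Fin n → ℝ := fun k => (z2 k).1 with hbdef
  have hmemA1 : ∀ i ∈ t1, a i ∈ A1 := by
    intro i hi; obtain ⟨x, hx, hq⟩ := hz1 i hi; simp [hadef, hq, hx]
  have hmemA2 : ∀ k ∈ t2, b k ∈ A2 := by
    intro k hk; obtain ⟨x, hx, hq⟩ := hz2 k hk; simp [hbdef, hq, hx]
  have hsnd1 : ∀ i ∈ t1, ∀ T : {T : Finset (Fin n) // T ∈ S},
      (z1 i).2 T = ∏ j ∈ T.1, a i j := by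
    intro i hi T; obtain ⟨x, hx, hq⟩ := hz1 i hi; simp [hadef, hq]
  have hsnd2 : ∀ k ∈ t2, ∀ T : {T : Finset (Fin n) // T ∈ S},
      (z2 k).2 T = ∏ j ∈ T.1, b k j := by
    intro k hk T; obtain ⟨x, hx, hq⟩ := hz2 k hk; simp [hbdef, hq]
  have hx1 : ∑ i ∈ t1, lam i • a i = x1 := by
    have := congrArg Prod.fst hc1
    simpa [Prod.fst_sum, hadef] using this
  have hx2 : ∑ k ∈ t2, mu k • b k = x2 := by
    have := congrArg Prod.fst hc2
    simpa [Prod.fst_sum, hbdef] using this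
  have hwm1 : ∀ T : {T : Finset (Fin n) // T ∈ S},
      w1 T = ∑ i ∈ t1, lam i * ∏ j ∈ T.1, a i j := by
    intro T
    have h := congrArg Prod.snd hc1
    simp only [Prod.snd_sum] at h
    have h' := congrFun h.symm T
    rw [Finset.sum_apply] at h'
    rw [h']
    exact Finset.sum_congr rfl fun i hi => by
      simp [hsnd1 i hi T, mul_comm]
  have hwm2 : ∀ T : {T : Finset (Fin n) // T ∈ S},
      w2 T = ∑ k ∈ t2, mu k * ∏ j ∈ T.1, b k j := by
    intro T
    have h := congrArg Prod.snd hc2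
    simp only [Prod.snd_sum] at h
    have h' := congrFun h.symm T
    rw [Finset.sum_apply] at h'
    rw [h']
    exact Finset.sum_congr rfl fun k hk => by
      simp [hsnd2 k hk T, mul_comm]
  have hmon : ∀ T ∈ S, ∑ i ∈ t1, lam i * ∏ j ∈ T, a i j
      = ∑ k ∈ t2, mu k * ∏ j ∈ T, b k j := by
    intro T hT
    rw [← hwm1 ⟨T, hT⟩, hw, hwm2 ⟨T, hT⟩]
  simp only [Set.mem_iInter]
  intro U hU
  -- indicators
  set I : Finset (Fin n) → (Fin n → ℝ) → ℝ :=
    fun W x => (∏ j ∈ W, x j) * ∏ j ∈ U \ W, (1 - x j) with hIdef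
  have Lsum : ∀ x : Fin n → ℝ, ∑ W ∈ U.powerset, I W x = 1 := by
    intro x
    have h := (Finset.prod_add (fun j => x j) (fun j => 1 - x j) U).symm
    simpa using h
  have Lexp : ∀ W ∈ U.powerset, ∀ x : Fin n → ℝ,
      I W x = ∑ T ∈ (U \ W).powerset, (-1 : ℝ) ^ T.card * ∏ j ∈ W ∪ T, x j := by
    intro W hW x
    have hWU : W ⊆ U := Finset.mem_powerset.mp hW
    have h1 : ∏ j ∈ U \ W, (1 - x j)
        = ∑ T ∈ (U \ W).powerset, (-1 : ℝ) ^ T.card * ∏ j ∈ T, x j := by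
      have h := Finset.prod_add (fun j => -x j) (fun _ => (1 : ℝ)) (U \ W)
      have h2 : ∀ j, 1 - x j = -x j + 1 := fun j => by ring
      simp only [h2]
      rw [h]
      refine Finset.sum_congr rfl fun T hT => ?_
      rw [Finset.prod_congr rfl (fun j _ => (neg_eq_neg_one_mul (x j))),
        Finset.prod_mul_distrib, Finset.prod_const]
      simp
    rw [hIdef]
    simp only [h1, Finset.mul_sum]
    refine Finset.sum_congr rfl fun T hT => ?_
    have hdisj : Disjoint W T := by
      have hT' : T ⊆ U \ W := Finset.mem_powerset.mp hT
      exact Finset.disjoint_left.mpr fun j hjW hjT =>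
        (Finset.mem_sdiff.mp (hT' hjT)).2 hjW
    rw [Finset.prod_union hdisj]
    ring
  have Lnn : ∀ (x : Fin n → ℝ), (∀ j, x j = 0 ∨ x j = 1) → ∀ W, 0 ≤ I W x := by
    intro x hx W
    refine mul_nonneg (Finset.prod_nonneg fun j _ => ?_) (Finset.prod_nonneg fun j _ => ?_) <;>
      rcases hx j with h | h <;> simp [h]
  have hnn1 : ∀ W, ∀ i ∈ t1, 0 ≤ lam i * I W (a i) := fun W i hi =>
    mul_nonneg (hlam0 i hi) (Lnn (a i) (hb1 (a i) (hmemA1 i hi)) W)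
  have hnn2 : ∀ W, ∀ k ∈ t2, 0 ≤ mu k * I W (b k) := fun W k hk =>
    mul_nonneg (hmu0 k hk) (Lnn (b k) (hb2 (b k) (hmemA2 k hk)) W)
  set m : Finset (Fin n) → ℝ := fun W => ∑ i ∈ t1, lam i * I W (a i) with hmdef
  have hm2 : ∀ W ∈ U.powerset, m W = ∑ k ∈ t2, mu k * I W (b k) := by
    intro W hW
    have hWU : W ⊆ U := Finset.mem_powerset.mp hW
    classical
    have hswap : ∀ {ι : Type} (t : Finset ι) (c : ι → ℝ) (y : ι → Fin n → ℝ),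
        ∑ i ∈ t, c i * I W (y i)
          = ∑ T ∈ (U \ W).powerset, (-1 : ℝ) ^ T.card
              * ∑ i ∈ t, c i * ∏ j ∈ W ∪ T, y i j := by
      intro ι t c y
      simp only [fun i => Lexp W hW (y i), Finset.mul_sum]
      rw [Finset.sum_comm]
      refine Finset.sum_congr rfl fun T _ => ?_
      exact Finset.sum_congr rfl fun i _ => by ring
    have key : ∀ T ∈ (U \ W).powerset, W ∪ T ∈ S := fun T hT =>
      hdown U hU _ (Finset.union_subset hWU
        ((Finset.mem_powerset.mp hT).trans (Finset.sdiff_subset)))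
    calc (∑ i ∈ t1, lam i * I W (a i))
        = ∑ T ∈ (U \ W).powerset, (-1 : ℝ) ^ T.card
            * ∑ i ∈ t1, lam i * ∏ j ∈ W ∪ T, a i j := hswap t1 lam a
      _ = ∑ T ∈ (U \ W).powerset, (-1 : ℝ) ^ T.card
            * ∑ k ∈ t2, mu k * ∏ j ∈ W ∪ T, b k j :=
          Finset.sum_congr rfl fun T hT => by rw [hmon (W ∪ T) (key T hT)]
      _ = ∑ k ∈ t2, mu k * I W (b k) := (hswap t2 mu b).symm
  have hmnn : ∀ W, 0 ≤ m W := fun W => Finset.sum_nonneg (hnn1 W)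
  have hmsum : ∑ W ∈ U.powerset, m W = 1 := by
    rw [hmdef]
    rw [Finset.sum_comm]
    calc ∑ i ∈ t1, ∑ W ∈ U.powerset, lam i * I W (a i)
        = ∑ i ∈ t1, lam i := Finset.sum_congr rfl fun i _ => by
          rw [← Finset.mul_sum, Lsum, mul_one]
      _ = 1 := hlam1
  have hzero1 : ∀ W, m W = 0 → ∀ i ∈ t1, lam i * I W (a i) = 0 := by
    intro W h0 i hi
    exact (Finset.sum_eq_zero_iff_of_nonneg (hnn1 W)).mp h0 i hi
  have hzero2 : ∀ W ∈ U.powerset, m W = 0 → ∀ k ∈ t2, mu k * I W (b k) = 0 := by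
    intro W hW h0 k hk
    refine (Finset.sum_eq_zero_iff_of_nonneg (hnn2 W)).mp ?_ k hk
    rw [← hm2 W hW]; exact h0
  classical
  set ν : Finset (Fin n) × ι1 × ι2 → ℝ :=
    fun q => lam q.2.1 * I q.1 (a q.2.1) * (mu q.2.2 * I q.1 (b q.2.2)) / m q.1 with hν
  set tfull : Finset (Finset (Fin n) × ι1 × ι2) := U.powerset ×ˢ t1 ×ˢ t2 with htfull
  set tpos : Finset (Finset (Fin n) × ι1 × ι2) := tfull.filter (fun q => ν q ≠ 0) with htpos
  have hmemfull : ∀ q ∈ tfull, q.1 ∈ U.powerset ∧ q.2.1 ∈ t1 ∧ q.2.2 ∈ t2 := by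
    intro q hq
    rw [htfull, Finset.mem_product] at hq
    exact ⟨hq.1, Finset.mem_product.mp hq.2⟩
  have hν0 : ∀ q ∈ tpos, 0 ≤ ν q := by
    intro q hq
    obtain ⟨hqf, -⟩ := Finset.mem_filter.mp hq
    obtain ⟨hW, h21, h22⟩ := hmemfull q hqf
    exact div_nonneg (mul_nonneg (hnn1 _ _ h21) (hnn2 _ _ h22)) (hmnn _)
  have hinner1 : ∀ W ∈ U.powerset, ∀ i ∈ t1,
      ∑ k ∈ t2, ν (W, i, k) = lam i * I W (a i) := by
    intro W hW i hi
    have h1 : ∑ k ∈ t2, ν (W, i, k)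
        = lam i * I W (a i) * (∑ k ∈ t2, mu k * I W (b k)) / m W := by
      rw [Finset.mul_sum, Finset.sum_div]
    rw [h1, ← hm2 W hW]
    rcases eq_or_ne (m W) 0 with h0 | h0
    · rw [h0]
      simp [hzero1 W h0 i hi]
    · field_simp
  have hinner2 : ∀ W ∈ U.powerset, ∀ k ∈ t2,
      ∑ i ∈ t1, ν (W, i, k) = mu k * I W (b k) := by
    intro W hW k hk
    have h1 : ∑ i ∈ t1, ν (W, i, k)
        = (∑ i ∈ t1, lam i * I W (a i)) * (mu k * I W (b k)) / m W := by
      rw [Finset.sum_mul, Finset.sum_div]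
    rw [h1]
    rcases eq_or_ne (m W) 0 with h0 | h0
    · rw [h0]
      simp [hzero2 W hW h0 k hk]
    · rw [show (∑ i ∈ t1, lam i * I W (a i)) = m W from rfl]
      field_simp
  have hsumfull : ∑ q ∈ tfull, ν q = 1 := by
    rw [htfull, Finset.sum_product]
    have h : ∀ W ∈ U.powerset, ∑ y ∈ t1 ×ˢ t2, ν (W, y) = m W := by
      intro W hW
      rw [Finset.sum_product]
      calc ∑ i ∈ t1, ∑ k ∈ t2, ν (W, i, k)
          = ∑ i ∈ t1, lam i * I W (a i) :=
            Finset.sum_congr rfl fun i hi => hinner1 W hW i hi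
        _ = m W := rfl
    exact (Finset.sum_congr rfl h).trans hmsum
  have hsum : ∑ q ∈ tpos, ν q = 1 := by
    rw [htpos, Finset.sum_filter_ne_zero]
    exact hsumfull
  have hpoints : ∀ q ∈ tpos,
      (a q.2.1, b q.2.2) ∈ {p : (Fin n → ℝ) × (Fin n → ℝ) |
        p.1 ∈ A1 ∧ p.2 ∈ A2 ∧ ∀ j ∈ U, p.1 j = p.2 j} := by
    intro q hq
    obtain ⟨hqf, hνne⟩ := Finset.mem_filter.mp hq
    obtain ⟨hWmem, h21, h22⟩ := hmemfull q hqf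
    refine ⟨hmemA1 _ h21, hmemA2 _ h22, ?_⟩
    have hnum : lam q.2.1 * I q.1 (a q.2.1) * (mu q.2.2 * I q.1 (b q.2.2)) ≠ 0 := by
      intro h
      exact hνne (by rw [hν]; simp only; rw [h, zero_div])
    have hIa : I q.1 (a q.2.1) ≠ 0 := fun h => hnum (by rw [h]; ring)
    have hIb : I q.1 (b q.2.2) ≠ 0 := fun h => hnum (by rw [h]; ring)
    have hfac : ∀ (x : Fin n → ℝ), (∀ j, x j = 0 ∨ x j = 1) → I q.1 x ≠ 0 →
        ∀ j ∈ U, x j = if j ∈ q.1 then 1 else 0 := by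
      intro x hx hne j hj
      have h1 : ∏ jj ∈ q.1, x jj ≠ 0 := fun h => hne (by rw [hIdef]; simp only; rw [h, zero_mul])
      have h2 : ∏ jj ∈ U \ q.1, (1 - x jj) ≠ 0 := fun h => hne (by rw [hIdef]; simp only; rw [h, mul_zero])
      by_cases hjW : j ∈ q.1
      · simp only [hjW, if_true]
        have hne0 := Finset.prod_ne_zero_iff.mp h1 j hjW
        rcases hx j with h | h
        · exact absurd h hne0
        · exact h
      · simp only [hjW, if_false]
        have hne1 := Finset.prod_ne_zero_iff.mp h2 j (Finset.mem_sdiff.mpr ⟨hj, hjW⟩)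
        rcases hx j with h | h
        · exact h
        · exact absurd (by rw [h]; ring) hne1
    intro j hj
    show a q.2.1 j = b q.2.2 j
    rw [hfac (a q.2.1) (hb1 _ (hmemA1 _ h21)) hIa j hj,
      hfac (b q.2.2) (hb2 _ (hmemA2 _ h22)) hIb j hj]
  have hext : ∑ q ∈ tpos, ν q • (a q.2.1, b q.2.2)
      = ∑ q ∈ tfull, ν q • (a q.2.1, b q.2.2) := by
    rw [htpos]
    refine Finset.sum_filter_of_ne ?_
    intro q hq hfne hν0'
    exact hfne (by rw [hν0', zero_smul])
  have hfst : (∑ q ∈ tfull, ν q • ((a q.2.1, b q.2.2) : (Fin n → ℝ) × (Fin n → ℝ))).1 = x1 := by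
    rw [Prod.fst_sum]
    simp only [Prod.smul_fst]
    rw [htfull, Finset.sum_product]
    have inner : ∀ W ∈ U.powerset, ∑ y ∈ t1 ×ˢ t2, ν (W, y) • a y.1
        = ∑ i ∈ t1, (lam i * I W (a i)) • a i := by
      intro W hW
      rw [Finset.sum_product]
      refine Finset.sum_congr rfl fun i hi => ?_
      show ∑ k ∈ t2, ν (W, i, k) • a i = _
      rw [← Finset.sum_smul, hinner1 W hW i hi]
    rw [Finset.sum_congr rfl inner, Finset.sum_comm]
    calc ∑ i ∈ t1, ∑ W ∈ U.powerset, (lam i * I W (a i)) • a i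
        = ∑ i ∈ t1, lam i • a i := Finset.sum_congr rfl fun i _ => by
          rw [← Finset.sum_smul, ← Finset.mul_sum, Lsum, mul_one]
      _ = x1 := hx1
  have hsnd : (∑ q ∈ tfull, ν q • ((a q.2.1, b q.2.2) : (Fin n → ℝ) × (Fin n → ℝ))).2 = x2 := by
    rw [Prod.snd_sum]
    simp only [Prod.smul_snd]
    rw [htfull, Finset.sum_product]
    have inner : ∀ W ∈ U.powerset, ∑ y ∈ t1 ×ˢ t2, ν (W, y) • b y.2
        = ∑ k ∈ t2, (mu k * I W (b k)) • b k := by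
      intro W hW
      rw [Finset.sum_product, Finset.sum_comm]
      refine Finset.sum_congr rfl fun k hk => ?_
      show ∑ i ∈ t1, ν (W, i, k) • b k = _
      rw [← Finset.sum_smul, hinner2 W hW k hk]
    rw [Finset.sum_congr rfl inner, Finset.sum_comm]
    calc ∑ k ∈ t2, ∑ W ∈ U.powerset, (mu k * I W (b k)) • b k
        = ∑ k ∈ t2, mu k • b k := Finset.sum_congr rfl fun k _ => by
          rw [← Finset.sum_smul, ← Finset.mul_sum, Lsum, mul_one]
      _ = x2 := hx2
  have hmem := Finset.centerMass_mem_convexHull tpos hν0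
    (by rw [hsum]; norm_num) hpoints
  rw [Finset.centerMass_eq_of_sum_1 _ _ hsum, hext] at hmem
  have : ((x1, x2) : (Fin n → ℝ) × (Fin n → ℝ))
      = ∑ q ∈ tfull, ν q • (a q.2.1, b q.2.2) := (Prod.ext hfst hsnd).symm
  rw [this]
  exact hmem
end

section
/- For a down-closed family U ⊆ 2^{[n]} with singletons of a fixed set U₀ ⊆ [n] (i.e., U = 2^{U₀}), and finite A^1, A^2 ⊆ {0,1}^n, the set { (x^1, w^1, x^2, w^2) : (x^i, w^i) ∈ conv(X_M^{(i)}), w^1_S = w^2_S ∀ S ⊆ U₀ } equals conv({ (x^1, m_{U₀}(x^1), x^2, m_{U₀}(x^2)) : x^i ∈ A^i, x^1_j = x^2_j ∀ j ∈ U₀ }), where X_M^{(i)} = { (x, m_{U₀}(x)) : x ∈ A^i } and m_{U₀}(x) = (∏_{j∈S} x_j)_{S ⊆ U₀}. In particular the projection to (x^1, x^2) equals conv({ (x^1, x^2) : x^i ∈ A^i, x^1_j = x^2_j ∀ j ∈ U₀ }). -/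
private lemma chi_expand {n : ℕ} (U0 : Finset (Fin n)) (z x : Fin n → ℝ) :
    ∏ j ∈ U0, ((2 * z j - 1) * x j + (1 - z j)) =
      ∑ S ∈ U0.powerset,
        ((∏ j ∈ S, (2 * z j - 1)) * ∏ j ∈ U0 \ S, (1 - z j)) * ∏ j ∈ S, x j := by
  rw [Finset.prod_add]
  refine Finset.sum_congr rfl fun S hS => ?_
  rw [Finset.prod_mul_distrib]
  ring

private lemma chi_indicator {n : ℕ} (U0 : Finset (Fin n)) (z x : Fin n → ℝ)
    (hz : ∀ j, z j = 0 ∨ z j = 1) (hx : ∀ j, x j = 0 ∨ x j = 1) :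
    ∏ j ∈ U0, ((2 * z j - 1) * x j + (1 - z j)) =
      if ∀ j ∈ U0, x j = z j then 1 else 0 := by
  classical
  have e : ∏ j ∈ U0, ((2 * z j - 1) * x j + (1 - z j)) =
      ∏ j ∈ U0, (if x j = z j then (1:ℝ) else 0) := by
    refine Finset.prod_congr rfl fun j hj => ?_
    rcases hz j with h1 | h1 <;> rcases hx j with h2 | h2 <;> rw [h1, h2] <;> norm_num
  rw [e, Finset.prod_boole]
  split <;> rfl

private lemma marginal_eq {n : ℕ} (U0 : Finset (Fin n)) (s1 s2 : Finset (Fin n → ℝ))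
    (lam mu : (Fin n → ℝ) → ℝ)
    (h : ∀ S ∈ U0.powerset,
      ∑ x ∈ s1, lam x * ∏ j ∈ S, x j = ∑ y ∈ s2, mu y * ∏ j ∈ S, y j)
    (z : Fin n → ℝ) :
    ∑ x ∈ s1, lam x * ∏ j ∈ U0, ((2 * z j - 1) * x j + (1 - z j)) =
      ∑ y ∈ s2, mu y * ∏ j ∈ U0, ((2 * z j - 1) * y j + (1 - z j)) := by
  simp_rw [chi_expand U0 z, Finset.mul_sum]
  rw [Finset.sum_comm, Finset.sum_comm (s := s2)]
  refine Finset.sum_congr rfl fun S hS => ?_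
  have h' := h S hS
  calc ∑ x ∈ s1, lam x * (((∏ j ∈ S, (2 * z j - 1)) * ∏ j ∈ U0 \ S, (1 - z j)) * ∏ j ∈ S, x j)
      = ((∏ j ∈ S, (2 * z j - 1)) * ∏ j ∈ U0 \ S, (1 - z j)) * ∑ x ∈ s1, lam x * ∏ j ∈ S, x j := by
        rw [Finset.mul_sum]; exact Finset.sum_congr rfl fun x _ => by ring
    _ = ((∏ j ∈ S, (2 * z j - 1)) * ∏ j ∈ U0 \ S, (1 - z j)) * ∑ y ∈ s2, mu y * ∏ j ∈ S, y j := by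
        rw [h']
    _ = ∑ y ∈ s2, mu y * (((∏ j ∈ S, (2 * z j - 1)) * ∏ j ∈ U0 \ S, (1 - z j)) * ∏ j ∈ S, y j) := by
        rw [Finset.mul_sum]; exact Finset.sum_congr rfl fun y _ => by ring

private lemma exists_weights {E : Type*} [AddCommGroup E] [Module ℝ E]
    {ι : Type*} (s : Finset ι) (f : ι → E)
    (hf : ∀ i ∈ s, ∀ j ∈ s, f i = f j → i = j) {p : E}
    (hp : p ∈ convexHull ℝ (f '' ↑s)) :
    ∃ w : ι → ℝ, (∀ i ∈ s, 0 ≤ w i) ∧ ∑ i ∈ s, w i = 1 ∧ ∑ i ∈ s, w i • f i = p := by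
  classical
  have himg : f '' ↑s = ↑(s.image f) := by simp
  rw [himg, Finset.convexHull_eq] at hp
  obtain ⟨w, hw0, hw1, hwp⟩ := hp
  refine ⟨fun i => w (f i), fun i hi => hw0 _ (Finset.mem_image_of_mem f hi), ?_, ?_⟩
  · rw [Finset.sum_image hf] at hw1; exact hw1
  · rw [Finset.centerMass_eq_of_sum_1 _ id hw1, Finset.sum_image hf] at hwp
    simpa using hwp

/-- Lemma 2 of the paper for two blocks: imposing agreement of all monomials
over subsets of `U₀` on the convex hulls yields exactly the convex hull of the
coupled points agreeing on `U₀`; in particular the projection to the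
`x`-coordinates is `conv {(x¹, x²) : xⁱ ∈ Aⁱ, x¹_j = x²_j ∀ j ∈ U₀}`. -/
theorem stmt17 {n : ℕ} (A1 A2 : Set (Fin n → ℝ)) (hA1 : A1.Finite) (hA2 : A2.Finite)
    (hb1 : ∀ x ∈ A1, ∀ j, x j = 0 ∨ x j = 1)
    (hb2 : ∀ x ∈ A2, ∀ j, x j = 0 ∨ x j = 1)
    (U0 : Finset (Fin n)) :
    letI m : (Fin n → ℝ) → ({T : Finset (Fin n) // T ⊆ U0} → ℝ) :=
      fun x T => ∏ j ∈ T.1, x j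
    letI XM1 : Set ((Fin n → ℝ) × ({T : Finset (Fin n) // T ⊆ U0} → ℝ)) :=
      {q | ∃ x ∈ A1, q = (x, m x)}
    letI XM2 : Set ((Fin n → ℝ) × ({T : Finset (Fin n) // T ⊆ U0} → ℝ)) :=
      {q | ∃ x ∈ A2, q = (x, m x)}
    letI C : Set (((Fin n → ℝ) × ({T : Finset (Fin n) // T ⊆ U0} → ℝ)) ×
        ((Fin n → ℝ) × ({T : Finset (Fin n) // T ⊆ U0} → ℝ))) :=
      convexHull ℝ {p | ∃ x1 ∈ A1, ∃ x2 ∈ A2, (∀ j ∈ U0, x1 j = x2 j) ∧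
        p = ((x1, m x1), (x2, m x2))}
    ({p : ((Fin n → ℝ) × ({T : Finset (Fin n) // T ⊆ U0} → ℝ)) ×
        ((Fin n → ℝ) × ({T : Finset (Fin n) // T ⊆ U0} → ℝ)) |
        p.1 ∈ convexHull ℝ XM1 ∧ p.2 ∈ convexHull ℝ XM2 ∧ p.1.2 = p.2.2} = C) ∧
      (fun p : ((Fin n → ℝ) × ({T : Finset (Fin n) // T ⊆ U0} → ℝ)) ×
          ((Fin n → ℝ) × ({T : Finset (Fin n) // T ⊆ U0} → ℝ)) => (p.1.1, p.2.1)) '' C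
        = convexHull ℝ {p : (Fin n → ℝ) × (Fin n → ℝ) |
            p.1 ∈ A1 ∧ p.2 ∈ A2 ∧ ∀ j ∈ U0, p.1 j = p.2 j} := by
  classical
  set m : (Fin n → ℝ) → ({T : Finset (Fin n) // T ⊆ U0} → ℝ) :=
    fun x T => ∏ j ∈ T.1, x j with hm
  set XM1 : Set ((Fin n → ℝ) × ({T : Finset (Fin n) // T ⊆ U0} → ℝ)) :=
    {q | ∃ x ∈ A1, q = (x, m x)} with hXM1
  set XM2 : Set ((Fin n → ℝ) × ({T : Finset (Fin n) // T ⊆ U0} → ℝ)) :=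
    {q | ∃ x ∈ A2, q = (x, m x)} with hXM2
  set G : Set (((Fin n → ℝ) × ({T : Finset (Fin n) // T ⊆ U0} → ℝ)) ×
      ((Fin n → ℝ) × ({T : Finset (Fin n) // T ⊆ U0} → ℝ))) :=
    {p | ∃ x1 ∈ A1, ∃ x2 ∈ A2, (∀ j ∈ U0, x1 j = x2 j) ∧
      p = ((x1, m x1), (x2, m x2))} with hG
  have hmagree : ∀ x y : Fin n → ℝ, (∀ j ∈ U0, x j = y j) → m x = m y := by
    intro x y h
    funext T
    exact Finset.prod_congr rfl fun j hj => h j (T.2 hj)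
  -- easy inclusion
  have hGsub : G ⊆ {p | p.1 ∈ convexHull ℝ XM1 ∧ p.2 ∈ convexHull ℝ XM2 ∧ p.1.2 = p.2.2} := by
    rintro p ⟨x1, hx1, x2, hx2, hagr, rfl⟩
    exact ⟨subset_convexHull ℝ XM1 ⟨x1, hx1, rfl⟩, subset_convexHull ℝ XM2 ⟨x2, hx2, rfl⟩,
      hmagree x1 x2 hagr⟩
  have hconvL : Convex ℝ {p : ((Fin n → ℝ) × ({T : Finset (Fin n) // T ⊆ U0} → ℝ)) ×
      ((Fin n → ℝ) × ({T : Finset (Fin n) // T ⊆ U0} → ℝ)) |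
      p.1 ∈ convexHull ℝ XM1 ∧ p.2 ∈ convexHull ℝ XM2 ∧ p.1.2 = p.2.2} := by
    intro p hp q hq a b ha hb hab
    refine ⟨(convex_convexHull ℝ XM1) hp.1 hq.1 ha hb hab,
            (convex_convexHull ℝ XM2) hp.2.1 hq.2.1 ha hb hab, ?_⟩
    show a • p.1.2 + b • q.1.2 = a • p.2.2 + b • q.2.2
    rw [hp.2.2, hq.2.2]
  -- hard inclusion
  have hmain : {p : ((Fin n → ℝ) × ({T : Finset (Fin n) // T ⊆ U0} → ℝ)) ×
      ((Fin n → ℝ) × ({T : Finset (Fin n) // T ⊆ U0} → ℝ)) |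
      p.1 ∈ convexHull ℝ XM1 ∧ p.2 ∈ convexHull ℝ XM2 ∧ p.1.2 = p.2.2} ⊆ convexHull ℝ G := by
    rintro p ⟨hp1, hp2, hpw⟩
    set s1 := hA1.toFinset with hs1
    set s2 := hA2.toFinset with hs2
    have hs1b : ∀ x ∈ s1, ∀ j, x j = 0 ∨ x j = 1 := fun x hx => hb1 x (hA1.mem_toFinset.1 hx)
    have hs2b : ∀ y ∈ s2, ∀ j, y j = 0 ∨ y j = 1 := fun y hy => hb2 y (hA2.mem_toFinset.1 hy)
    have hXM1' : XM1 = (fun x => (x, m x)) '' ↑s1 := by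
      rw [hXM1]
      ext q
      simp only [Set.mem_setOf_eq, Set.mem_image, hs1, Set.Finite.coe_toFinset]
      constructor
      · rintro ⟨x, hx, rfl⟩; exact ⟨x, hx, rfl⟩
      · rintro ⟨x, hx, rfl⟩; exact ⟨x, hx, rfl⟩
    have hXM2' : XM2 = (fun x => (x, m x)) '' ↑s2 := by
      rw [hXM2]
      ext q
      simp only [Set.mem_setOf_eq, Set.mem_image, hs2, Set.Finite.coe_toFinset]
      constructor
      · rintro ⟨x, hx, rfl⟩; exact ⟨x, hx, rfl⟩
      · rintro ⟨x, hx, rfl⟩; exact ⟨x, hx, rfl⟩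
    have hinj1 : ∀ x ∈ s1, ∀ y ∈ s1, ((x, m x) : (Fin n → ℝ) × _) = (y, m y) → x = y :=
      fun x _ y _ h => congrArg Prod.fst h
    have hinj2 : ∀ x ∈ s2, ∀ y ∈ s2, ((x, m x) : (Fin n → ℝ) × _) = (y, m y) → x = y :=
      fun x _ y _ h => congrArg Prod.fst h
    obtain ⟨lam, hlam0, hlam1, hlamp⟩ := exists_weights s1 _ hinj1 (hXM1' ▸ hp1)
    obtain ⟨mu, hmu0, hmu1, hmup⟩ := exists_weights s2 _ hinj2 (hXM2' ▸ hp2)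
    -- monomial agreement
    have hmono : ∀ S ∈ U0.powerset,
        ∑ x ∈ s1, lam x * ∏ j ∈ S, x j = ∑ y ∈ s2, mu y * ∏ j ∈ S, y j := by
      intro S hS
      have hT : S ⊆ U0 := Finset.mem_powerset.1 hS
      have h1 := congrArg (fun q : (Fin n → ℝ) × ({T : Finset (Fin n) // T ⊆ U0} → ℝ) =>
        q.2 ⟨S, hT⟩) hlamp
      have h2 := congrArg (fun q : (Fin n → ℝ) × ({T : Finset (Fin n) // T ⊆ U0} → ℝ) =>
        q.2 ⟨S, hT⟩) hmup
      simp only [Prod.snd_sum, Prod.smul_snd, Finset.sum_apply, Pi.smul_apply,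
        smul_eq_mul] at h1 h2
      rw [hpw] at h1
      exact h1.trans h2.symm
    -- pattern marginals agree
    have hQP : ∀ z : Fin n → ℝ, (∀ j, z j = 0 ∨ z j = 1) →
        ∑ x ∈ s1.filter (fun x => ∀ j ∈ U0, x j = z j), lam x
          = ∑ y ∈ s2.filter (fun y => ∀ j ∈ U0, y j = z j), mu y := by
      intro z hz
      rw [Finset.sum_filter, Finset.sum_filter]
      calc ∑ x ∈ s1, (if ∀ j ∈ U0, x j = z j then lam x else 0)
          = ∑ x ∈ s1, lam x * ∏ j ∈ U0, ((2 * z j - 1) * x j + (1 - z j)) := by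
            refine Finset.sum_congr rfl fun x hx => ?_
            rw [chi_indicator U0 z x hz (hs1b x hx), mul_ite, mul_one, mul_zero]
        _ = ∑ y ∈ s2, mu y * ∏ j ∈ U0, ((2 * z j - 1) * y j + (1 - z j)) :=
            marginal_eq U0 s1 s2 lam mu hmono z
        _ = ∑ y ∈ s2, (if ∀ j ∈ U0, y j = z j then mu y else 0) := by
            refine Finset.sum_congr rfl fun y hy => ?_
            rw [chi_indicator U0 z y hz (hs2b y hy), mul_ite, mul_one, mul_zero]
    -- the coupling
    set nu : (Fin n → ℝ) × (Fin n → ℝ) → ℝ := fun q =>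
      if ∀ j ∈ U0, q.1 j = q.2 j then
        lam q.1 * mu q.2 / (∑ y ∈ s2.filter (fun y => ∀ j ∈ U0, y j = q.1 j), mu y)
      else 0 with hnu
    have hnu0 : ∀ q ∈ s1 ×ˢ s2, 0 ≤ nu q := by
      intro q hq
      obtain ⟨h1, h2⟩ := Finset.mem_product.1 hq
      rw [hnu]
      dsimp only
      split
      · exact div_nonneg (mul_nonneg (hlam0 _ h1) (hmu0 _ h2))
          (Finset.sum_nonneg fun y hy => hmu0 y (Finset.mem_filter.1 hy).1)
      · exact le_rfl
    -- row sums
    have hrow : ∀ x ∈ s1, ∑ y ∈ s2, nu (x, y) = lam x := by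
      intro x hx
      have hxz : ∀ j, x j = 0 ∨ x j = 1 := hs1b x hx
      have e : ∑ y ∈ s2, nu (x, y)
          = ∑ y ∈ s2.filter (fun y => ∀ j ∈ U0, x j = y j),
              lam x * mu y / (∑ y' ∈ s2.filter (fun y' => ∀ j ∈ U0, y' j = x j), mu y') := by
        rw [Finset.sum_filter]
      have hflip : s2.filter (fun y => ∀ j ∈ U0, x j = y j)
          = s2.filter (fun y => ∀ j ∈ U0, y j = x j) :=
        Finset.filter_congr fun y _ =>
          ⟨fun h j hj => (h j hj).symm, fun h j hj => (h j hj).symm⟩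
      rw [e, hflip]
      by_cases hPx : (∑ y' ∈ s2.filter (fun y' => ∀ j ∈ U0, y' j = x j), mu y') = 0
      · have hQx : ∑ x' ∈ s1.filter (fun x' => ∀ j ∈ U0, x' j = x j), lam x' = 0 := by
          rw [hQP x hxz]; exact hPx
        have hxmem : x ∈ s1.filter (fun x' => ∀ j ∈ U0, x' j = x j) :=
          Finset.mem_filter.2 ⟨hx, fun j hj => rfl⟩
        have hlamx : lam x = 0 := by
          have hle : lam x ≤ 0 := by
            rw [← hQx]
            exact Finset.single_le_sum
              (fun i hi => hlam0 i (Finset.mem_filter.1 hi).1) hxmem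
          exact le_antisymm hle (hlam0 x hx)
        rw [hlamx]
        simp
      · have e2 : ∀ y ∈ s2.filter (fun y => ∀ j ∈ U0, y j = x j),
            lam x * mu y / (∑ y' ∈ s2.filter (fun y' => ∀ j ∈ U0, y' j = x j), mu y')
              = (lam x / (∑ y' ∈ s2.filter (fun y' => ∀ j ∈ U0, y' j = x j), mu y')) * mu y :=
          fun y _ => by ring
        rw [Finset.sum_congr rfl e2, ← Finset.mul_sum, div_mul_cancel₀ _ hPx]
    -- column sums
    have hcol : ∀ y ∈ s2, ∑ x ∈ s1, nu (x, y) = mu y := by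
      intro y hy
      have hyz : ∀ j, y j = 0 ∨ y j = 1 := hs2b y hy
      have e : ∑ x ∈ s1, nu (x, y)
          = ∑ x ∈ s1.filter (fun x => ∀ j ∈ U0, x j = y j),
              lam x * mu y / (∑ y' ∈ s2.filter (fun y' => ∀ j ∈ U0, y' j = x j), mu y') := by
        rw [Finset.sum_filter]
      have ePx : ∀ x ∈ s1.filter (fun x => ∀ j ∈ U0, x j = y j),
          lam x * mu y / (∑ y' ∈ s2.filter (fun y' => ∀ j ∈ U0, y' j = x j), mu y')
            = (mu y / (∑ y' ∈ s2.filter (fun y' => ∀ j ∈ U0, y' j = y j), mu y')) * lam x := by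
        intro x hx
        obtain ⟨-, hagr⟩ := Finset.mem_filter.1 hx
        have : s2.filter (fun y' => ∀ j ∈ U0, y' j = x j)
            = s2.filter (fun y' => ∀ j ∈ U0, y' j = y j) :=
          Finset.filter_congr fun y' _ =>
            ⟨fun h j hj => (h j hj).trans (hagr j hj),
             fun h j hj => (h j hj).trans (hagr j hj).symm⟩
        rw [this]
        ring
      rw [e, Finset.sum_congr rfl ePx, ← Finset.mul_sum, hQP y hyz]
      by_cases hPy : (∑ y' ∈ s2.filter (fun y' => ∀ j ∈ U0, y' j = y j), mu y') = 0
      · have hymem : y ∈ s2.filter (fun y' => ∀ j ∈ U0, y' j = y j) :=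
          Finset.mem_filter.2 ⟨hy, fun j hj => rfl⟩
        have hmuy : mu y = 0 := by
          have hle : mu y ≤ 0 := by
            rw [← hPy]
            exact Finset.single_le_sum
              (fun i hi => hmu0 i (Finset.mem_filter.1 hi).1) hymem
          exact le_antisymm hle (hmu0 y hy)
        rw [hPy, hmuy]
        simp
      · rw [div_mul_cancel₀ _ hPy]
    -- total mass
    have htot : ∑ q ∈ s1 ×ˢ s2, nu q = 1 := by
      rw [Finset.sum_product, Finset.sum_congr rfl hrow]
      exact hlam1
    -- barycentre identity
    have hpt : ∑ q ∈ s1 ×ˢ s2, nu q • (((q.1, m q.1), (q.2, m q.2)) :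
        ((Fin n → ℝ) × ({T : Finset (Fin n) // T ⊆ U0} → ℝ)) ×
        ((Fin n → ℝ) × ({T : Finset (Fin n) // T ⊆ U0} → ℝ))) = p := by
      refine Prod.ext ?_ ?_
      · have e1 : (∑ q ∈ s1 ×ˢ s2, nu q • (((q.1, m q.1), (q.2, m q.2)) :
            ((Fin n → ℝ) × ({T : Finset (Fin n) // T ⊆ U0} → ℝ)) ×
            ((Fin n → ℝ) × ({T : Finset (Fin n) // T ⊆ U0} → ℝ)))).1
            = ∑ x ∈ s1, ∑ y ∈ s2, nu (x, y) • ((x, m x) :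
                (Fin n → ℝ) × ({T : Finset (Fin n) // T ⊆ U0} → ℝ)) := by
          rw [Prod.fst_sum, Finset.sum_product]
          exact Finset.sum_congr rfl fun _ _ => Finset.sum_congr rfl fun _ _ => rfl
        rw [e1]
        calc ∑ x ∈ s1, ∑ y ∈ s2, nu (x, y) • ((x, m x) :
                (Fin n → ℝ) × ({T : Finset (Fin n) // T ⊆ U0} → ℝ))
            = ∑ x ∈ s1, (∑ y ∈ s2, nu (x, y)) • ((x, m x) :
                (Fin n → ℝ) × ({T : Finset (Fin n) // T ⊆ U0} → ℝ)) := by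
              refine Finset.sum_congr rfl fun x hx => ?_
              rw [Finset.sum_smul]
          _ = ∑ x ∈ s1, lam x • ((x, m x) :
                (Fin n → ℝ) × ({T : Finset (Fin n) // T ⊆ U0} → ℝ)) :=
              Finset.sum_congr rfl fun x hx => by rw [hrow x hx]
          _ = p.1 := hlamp
      · have e2 : (∑ q ∈ s1 ×ˢ s2, nu q • (((q.1, m q.1), (q.2, m q.2)) :
            ((Fin n → ℝ) × ({T : Finset (Fin n) // T ⊆ U0} → ℝ)) ×
            ((Fin n → ℝ) × ({T : Finset (Fin n) // T ⊆ U0} → ℝ)))).2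
            = ∑ y ∈ s2, ∑ x ∈ s1, nu (x, y) • ((y, m y) :
                (Fin n → ℝ) × ({T : Finset (Fin n) // T ⊆ U0} → ℝ)) := by
          rw [Prod.snd_sum, Finset.sum_product_right]
          exact Finset.sum_congr rfl fun _ _ => Finset.sum_congr rfl fun _ _ => rfl
        rw [e2]
        calc ∑ y ∈ s2, ∑ x ∈ s1, nu (x, y) • ((y, m y) :
                (Fin n → ℝ) × ({T : Finset (Fin n) // T ⊆ U0} → ℝ))
            = ∑ y ∈ s2, (∑ x ∈ s1, nu (x, y)) • ((y, m y) :
                (Fin n → ℝ) × ({T : Finset (Fin n) // T ⊆ U0} → ℝ)) := by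
              refine Finset.sum_congr rfl fun y hy => ?_
              rw [Finset.sum_smul]
          _ = ∑ y ∈ s2, mu y • ((y, m y) :
                (Fin n → ℝ) × ({T : Finset (Fin n) // T ⊆ U0} → ℝ)) :=
              Finset.sum_congr rfl fun y hy => by rw [hcol y hy]
          _ = p.2 := hmup
    -- restrict to agreeing pairs
    set t := (s1 ×ˢ s2).filter (fun q => ∀ j ∈ U0, q.1 j = q.2 j) with ht
    have hzero : ∀ q, ¬(∀ j ∈ U0, q.1 j = q.2 j) → nu q = 0 := by
      intro q h
      rw [hnu]
      exact if_neg h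
    have htot' : ∑ q ∈ t, nu q = 1 := by
      rw [ht, Finset.sum_filter_of_ne fun q _ hne => by
        by_contra h; exact hne (hzero q h)]
      exact htot
    have hptf : ∑ q ∈ t, nu q • (((q.1, m q.1), (q.2, m q.2)) :
        ((Fin n → ℝ) × ({T : Finset (Fin n) // T ⊆ U0} → ℝ)) ×
        ((Fin n → ℝ) × ({T : Finset (Fin n) // T ⊆ U0} → ℝ))) = p := by
      rw [ht, Finset.sum_filter_of_ne fun q _ hne => by
        by_contra h; exact hne (by rw [hzero q h, zero_smul])]
      exact hpt
    have hmemG : ∀ q ∈ t, (((q.1, m q.1), (q.2, m q.2)) :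
        ((Fin n → ℝ) × ({T : Finset (Fin n) // T ⊆ U0} → ℝ)) ×
        ((Fin n → ℝ) × ({T : Finset (Fin n) // T ⊆ U0} → ℝ))) ∈ convexHull ℝ G := by
      intro q hq
      obtain ⟨hqm, hagr⟩ := Finset.mem_filter.1 hq
      obtain ⟨h1, h2⟩ := Finset.mem_product.1 hqm
      exact subset_convexHull ℝ G
        ⟨q.1, hA1.mem_toFinset.1 h1, q.2, hA2.mem_toFinset.1 h2, hagr, rfl⟩
    rw [← hptf]
    exact (convex_convexHull ℝ G).sum_mem
      (fun q hq => hnu0 q (Finset.mem_filter.1 hq).1) htot' hmemG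
  constructor
  · exact Set.Subset.antisymm hmain (convexHull_min hGsub hconvL)
  · have hlin : IsLinearMap ℝ (fun p : ((Fin n → ℝ) × ({T : Finset (Fin n) // T ⊆ U0} → ℝ)) ×
        ((Fin n → ℝ) × ({T : Finset (Fin n) // T ⊆ U0} → ℝ)) => (p.1.1, p.2.1)) :=
      ⟨fun a b => rfl, fun c a => rfl⟩
    rw [hlin.image_convexHull]
    congr 1
    ext q
    constructor
    · rintro ⟨pp, ⟨x1, hx1, x2, hx2, hagr, rfl⟩, rfl⟩
      exact ⟨hx1, hx2, hagr⟩
    · rintro ⟨h1, h2, hagr⟩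
      exact ⟨((q.1, m q.1), (q.2, m q.2)), ⟨q.1, h1, q.2, h2, hagr, rfl⟩, rfl⟩
end

section
/- Let f : {0,1}^n → R ∪ {+∞} and g : {0,1}^n → R ∪ {+∞} with finite domains dom(f), dom(g) ⊆ {0,1}^n, and suppose dom(f) ∩ dom(g) ≠ ∅. Define the Lagrangian dual with vertex multipliers: for μ : {0,1}^n → R, L(μ) = min_{x} ( f(x) + μ_x ) + min_{x} ( g(x) − μ_x ), where minima are over dom(f) and dom(g) respectively. Then sup_μ L(μ) = min_{x ∈ dom(f) ∩ dom(g)} ( f(x) + g(x) ), i.e., zero duality gap holds, and the supremum is attained. -/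
/-- Abstract strong duality of the V-Lagrangian dual: with one multiplier per
vertex of `{0,1}^n`, the Lagrangian dual has zero duality gap and the supremum
is attained. -/
theorem stmt18 {n : ℕ} (Df Dg : Set (Fin n → Bool))
    (f g : (Fin n → Bool) → ℝ) (hne : (Df ∩ Dg).Nonempty) :
    IsGreatest
      {v : ℝ | ∃ μ : (Fin n → Bool) → ℝ,
        v = sInf ((fun x => f x + μ x) '' Df) + sInf ((fun x => g x - μ x) '' Dg)}
      (sInf ((fun x => f x + g x) '' (Df ∩ Dg))) := by
  classical
  set OPT := sInf ((fun x => f x + g x) '' (Df ∩ Dg)) with hOPT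
  have hfin : ∀ (s : Set (Fin n → Bool)) (h : (Fin n → Bool) → ℝ), (h '' s).Finite :=
    fun s h => (Set.toFinite s).image h
  obtain ⟨x₀, hx₀, hx₀eq⟩ : ∃ x ∈ Df ∩ Dg, f x + g x = OPT := by
    have hmem : OPT ∈ (fun x => f x + g x) '' (Df ∩ Dg) :=
      (hne.image _).csInf_mem (hfin _ _)
    obtain ⟨x, hx, hxeq⟩ := hmem
    exact ⟨x, hx, hxeq⟩
  constructor
  · refine ⟨fun x => if x ∈ Df then OPT - f x else g x, ?_⟩
    have h1 : (fun x => f x + if x ∈ Df then OPT - f x else g x) '' Df = {OPT} := by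
      rw [← Set.Nonempty.image_const ⟨x₀, hx₀.1⟩ OPT]
      refine Set.image_congr fun x hx => ?_
      simp [hx]
    have h2 : sInf ((fun x => g x - if x ∈ Df then OPT - f x else g x) '' Dg) = 0 := by
      apply le_antisymm
      · apply csInf_le (hfin _ _).bddBelow
        refine ⟨x₀, hx₀.2, ?_⟩
        simp only [hx₀.1, if_true]
        linarith [hx₀eq]
      · refine le_csInf ((hne.mono Set.inter_subset_right).image _) ?_
        rintro b ⟨x, hx, rfl⟩
        by_cases hxf : x ∈ Df
        · simp only [hxf, if_true]
          have : OPT ≤ f x + g x := csInf_le (hfin _ _).bddBelow ⟨x, ⟨hxf, hx⟩, rfl⟩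
          linarith
        · simp [hxf]
    rw [h1, h2, csInf_singleton, add_zero]
  · rintro v ⟨μ, rfl⟩
    have ha : sInf ((fun x => f x + μ x) '' Df) ≤ f x₀ + μ x₀ :=
      csInf_le (hfin _ _).bddBelow ⟨x₀, hx₀.1, rfl⟩
    have hb : sInf ((fun x => g x - μ x) '' Dg) ≤ g x₀ - μ x₀ :=
      csInf_le (hfin _ _).bddBelow ⟨x₀, hx₀.2, rfl⟩
    linarith [hx₀eq]
end

section
/- Suppose f, g : {0,1}^n → R are nonnegative functions and let φ ≥ max_x max(|f(x)|, |g(x)|). Let V ⊆ {0,1}^n, let p₁ = min_{x ∉ V} f(x), p₂ = min_{x ∉ V} g(x), and suppose there is v* ∈ V with f(v*) + g(v*) ≤ p₁ + p₂ and f(v*) + g(v*) ≤ f(v) + g(v) for all v ∈ V. If p₁ + p₂ > 0, define μ : {0,1}^n → R by μ_v = 0 for v ∉ V and μ_v = (−p₂ f(v) + p₁ g(v))/(p₁ + p₂) for v ∈ V. Then min_x (f(x) + μ_x) + min_x (g(x) − μ_x) = f(v*) + g(v*), i.e., μ is an optimal dual multiplier achieving zero gap, and every nonzero entry of μ is bounded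 in absolute value by 2φ. -/
/-- The explicit sparse dual multiplier constructed from the SDA termination
condition is optimal for the V-Lagrangian dual, and its nonzero entries are
bounded by `2φ`. -/
theorem stmt19 {n : ℕ} (f g : (Fin n → Bool) → ℝ) (φ : ℝ)
    (hf : ∀ x, 0 ≤ f x) (hg : ∀ x, 0 ≤ g x)
    (hφ : ∀ x, |f x| ≤ φ ∧ |g x| ≤ φ)
    (V : Finset (Fin n → Bool)) (hne : ∃ x, x ∉ V)
    (p1 p2 : ℝ)
    (hp1 : IsLeast (f '' {x | x ∉ V}) p1) (hp2 : IsLeast (g '' {x | x ∉ V}) p2)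
    (vstar : Fin n → Bool) (hv : vstar ∈ V)
    (hopt1 : f vstar + g vstar ≤ p1 + p2)
    (hopt2 : ∀ v ∈ V, f vstar + g vstar ≤ f v + g v)
    (hpos : 0 < p1 + p2) :
    letI μ : (Fin n → Bool) → ℝ :=
      fun v => if v ∈ V then (-p2 * f v + p1 * g v) / (p1 + p2) else 0
    (sInf (Set.range fun x => f x + μ x) + sInf (Set.range fun x => g x - μ x)
        = f vstar + g vstar) ∧
      ∀ v, μ v ≠ 0 → |μ v| ≤ 2 * φ := by
  set μ : (Fin n → Bool) → ℝ :=
    fun v => if v ∈ V then (-p2 * f v + p1 * g v) / (p1 + p2) else 0 with hμdef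
  obtain ⟨x1, hx1V, hx1⟩ := hp1.1
  obtain ⟨x2, hx2V, hx2⟩ := hp2.1
  have hp1nn : 0 ≤ p1 := hx1 ▸ hf x1
  have hp2nn : 0 ≤ p2 := hx2 ▸ hg x2
  have hS : p1 + p2 ≠ 0 := ne_of_gt hpos
  have hAnn : 0 ≤ f vstar + g vstar := add_nonneg (hf _) (hg _)
  have hlb1 : ∀ x, x ∉ V → p1 ≤ f x := fun x hx => hp1.2 ⟨x, hx, rfl⟩
  have hlb2 : ∀ x, x ∉ V → p2 ≤ g x := fun x hx => hp2.2 ⟨x, hx, rfl⟩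
  have h1 : IsLeast (Set.range fun x => f x + μ x)
      (p1 * (f vstar + g vstar) / (p1 + p2)) := by
    constructor
    · refine ⟨vstar, ?_⟩
      simp only [hμdef, if_pos hv]
      field_simp
      ring
    · rintro y ⟨x, rfl⟩
      dsimp only
      by_cases hx : x ∈ V
      · have key : f x + μ x = p1 * (f x + g x) / (p1 + p2) := by
          simp only [hμdef, if_pos hx]
          field_simp
          ring
        rw [key]
        gcongr p1 * ?_ / (p1 + p2)
        exact hopt2 x hx
      · have : p1 * (f vstar + g vstar) / (p1 + p2) ≤ p1 := by
          rw [div_le_iff₀ hpos]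
          nlinarith [mul_le_mul_of_nonneg_left hopt1 hp1nn]
        simp only [hμdef, if_neg hx]
        have := hlb1 x hx
        linarith
  have h2 : IsLeast (Set.range fun x => g x - μ x)
      (p2 * (f vstar + g vstar) / (p1 + p2)) := by
    constructor
    · refine ⟨vstar, ?_⟩
      simp only [hμdef, if_pos hv]
      field_simp
      ring
    · rintro y ⟨x, rfl⟩
      dsimp only
      by_cases hx : x ∈ V
      · have key : g x - μ x = p2 * (f x + g x) / (p1 + p2) := by
          simp only [hμdef, if_pos hx]
          field_simp
          ring
        rw [key]
        gcongr p2 * ?_ / (p1 + p2)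
        exact hopt2 x hx
      · have : p2 * (f vstar + g vstar) / (p1 + p2) ≤ p2 := by
          rw [div_le_iff₀ hpos]
          nlinarith [mul_le_mul_of_nonneg_left hopt1 hp2nn]
        simp only [hμdef, if_neg hx]
        have := hlb2 x hx
        linarith
  constructor
  · rw [h1.csInf_eq, h2.csInf_eq]
    field_simp
  · intro v hμ
    by_cases hx : v ∈ V
    · have hφ0 : 0 ≤ φ := le_trans (abs_nonneg _) (hφ v).1
      simp only [hμdef, if_pos hx]
      rw [abs_div, abs_of_pos hpos, div_le_iff₀ hpos]
      have habs : |(-p2 * f v + p1 * g v)| ≤ |(-p2) * f v| + |p1 * g v| :=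
        abs_add_le _ _
      rw [abs_mul, abs_mul, abs_neg, abs_of_nonneg hp2nn, abs_of_nonneg hp1nn]
        at habs
      have h1 := (hφ v).1
      have h2 := (hφ v).2
      nlinarith [mul_le_mul_of_nonneg_left h1 hp2nn,
        mul_le_mul_of_nonneg_left h2 hp1nn]
    · exact absurd (by simp [hμdef, hx]) hμ
end
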